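/- arXiv:2406.13182 — 4 statements merged into one kernel-verified Lean document; each statement's English description precedes it below -/
import Mathlib

section
/- Let X be a real-valued random variable and let s, s̃ be real numbers for which the tilted distributions X^(s), X^(s̃) exist and have finite means. If E[X^(s)] = E[X^(s̃)], then X^(s) and X^(s̃) have the same distribution. -/
open MeasureTheory ProbabilityTheory Real

lemma my_integrable_tilted_iff (ν : Measure ℝ) {f : ℝ → ℝ} (hf : Measurable f) (g : ℝ → ℝ) :
    Integrable g (ν.tilted f) ↔
      Integrable (fun x => g x * (Real.exp (f x) / ∫ x, Real.exp (f x) ∂ν)) ν := by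
  rw [Measure.tilted, integrable_withDensity_iff ((hf.exp.div_const _).ennreal_ofReal)
    (ae_of_all _ fun x => ENNReal.ofReal_lt_top)]
  refine integrable_congr (ae_of_all _ fun x => ?_)
  have hnn : 0 ≤ rexp (f x) / ∫ x, rexp (f x) ∂ν :=
    div_nonneg (exp_pos _).le (integral_nonneg fun y => (exp_pos _).le)
  simp [ENNReal.toReal_ofReal hnn]

lemma my_ae_eq_const_of_uncorrelated (P : Measure ℝ) [IsProbabilityMeasure P]
    {g : ℝ → ℝ} (hg : StrictMono g)
    (hid : Integrable (fun x => x) P) (hgint : Integrable g P)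
    (hmul : Integrable (fun x => x * g x) P)
    (h : ∫ x, x * g x ∂P = (∫ x, x ∂P) * ∫ x, g x ∂P) :
    ∃ c, ∀ᵐ x ∂P, x = c := by
  set h2 : ℝ × ℝ → ℝ := fun p => (p.1 - p.2) * (g p.1 - g p.2) with h2def
  have hpos : ∀ p : ℝ × ℝ, p.1 ≠ p.2 → 0 < h2 p := by
    intro p hne
    rcases lt_or_gt_of_ne hne with hlt | hlt
    · exact mul_pos_of_neg_of_neg (sub_neg.mpr hlt) (sub_neg.mpr (hg hlt))
    · exact mul_pos (sub_pos.mpr hlt) (sub_pos.mpr (hg hlt))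
  have hnonneg : ∀ p : ℝ × ℝ, 0 ≤ h2 p := by
    intro p
    by_cases hne : p.1 = p.2
    · simp [h2def, hne]
    · exact (hpos p hne).le
  have one_int : Integrable (fun _ : ℝ => (1 : ℝ)) P := integrable_const 1
  have A := hmul.mul_prod one_int
  have B := hid.mul_prod hgint
  have C := hgint.mul_prod hid
  have D := one_int.mul_prod hmul
  have AB : Integrable (fun p : ℝ × ℝ => p.1 * g p.1 * 1 - p.1 * g p.2) (P.prod P) := A.sub B
  have ABC : Integrable (fun p : ℝ × ℝ => p.1 * g p.1 * 1 - p.1 * g p.2 - g p.1 * p.2)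
      (P.prod P) := AB.sub C
  have ABCD : Integrable
      (fun p : ℝ × ℝ => p.1 * g p.1 * 1 - p.1 * g p.2 - g p.1 * p.2 + 1 * (p.2 * g p.2))
      (P.prod P) := ABC.add D
  have h2int : Integrable h2 (P.prod P) := by
    refine ABCD.congr (ae_of_all _ fun p => ?_)
    simp only [h2def]; ring
  have hint : ∫ p, h2 p ∂(P.prod P) = 0 := by
    have e0 : ∫ p, h2 p ∂(P.prod P) = ∫ p : ℝ × ℝ,
        (p.1 * g p.1 * 1 - p.1 * g p.2 - g p.1 * p.2 + 1 * (p.2 * g p.2)) ∂(P.prod P) := by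
      refine integral_congr_ae (ae_of_all _ fun p => ?_)
      simp only [h2def]; ring
    rw [e0, integral_add ABC D, integral_sub AB C, integral_sub A B,
      integral_prod_mul (fun x => x * g x) (fun _ => (1 : ℝ)),
      integral_prod_mul (fun x => x) g, integral_prod_mul g (fun x => x),
      integral_prod_mul (fun _ => (1 : ℝ)) (fun x => x * g x)]
    simp only [integral_const, probReal_univ, measure_univ, ENNReal.toReal_one, smul_eq_mul, one_mul, mul_one]
    rw [h]; ring
  have hae : h2 =ᵐ[P.prod P] 0 :=
    (integral_eq_zero_iff_of_nonneg hnonneg h2int).mp hint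
  have haeeq : ∀ᵐ p ∂(P.prod P), p.1 = p.2 := by
    filter_upwards [hae] with p hp
    by_contra hne
    exact (hpos p hne).ne' hp
  have hms : MeasurableSet {p : ℝ × ℝ | p.1 ≠ p.2} :=
    (measurableSet_eq_fun measurable_fst measurable_snd).compl
  have hnull : (P.prod P) {p : ℝ × ℝ | p.1 ≠ p.2} = 0 := by
    have := haeeq
    rw [ae_iff] at this
    exact this
  have hsec := (Measure.measure_prod_null hms).mp hnull
  haveI : (ae P).NeBot := ae_neBot.mpr (IsProbabilityMeasure.ne_zero P)
  obtain ⟨c, hc⟩ := hsec.exists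
  simp only [Pi.zero_apply] at hc
  refine ⟨c, ?_⟩
  rw [ae_iff]
  convert hc using 2
  ext y
  simp [ne_comm, eq_comm]

lemma tilted_eq_of_mean_eq_aux
    {Ω : Type*} [MeasurableSpace Ω] (μ : Measure Ω) [IsProbabilityMeasure μ]
    (X : Ω → ℝ) (hX : Measurable X) (s s' : ℝ) (hlt : s < s')
    (hs : Integrable (fun ω => Real.exp (s * X ω)) μ)
    (hs' : Integrable (fun ω => Real.exp (s' * X ω)) μ)
    (hms : Integrable (fun x => x) ((μ.map X).tilted (fun x => s * x)))
    (hms' : Integrable (fun x => x) ((μ.map X).tilted (fun x => s' * x)))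
    (hmean : (∫ x, x ∂((μ.map X).tilted (fun x => s * x)))
        = ∫ x, x ∂((μ.map X).tilted (fun x => s' * x))) :
    (μ.map X).tilted (fun x => s * x) = (μ.map X).tilted (fun x => s' * x) := by
  set ν := μ.map X with hνdef
  haveI : IsProbabilityMeasure ν := Measure.isProbabilityMeasure_map hX.aemeasurable
  have hse : Integrable (fun x => Real.exp (s * x)) ν :=
    (integrable_map_measure ((measurable_const.mul measurable_id).exp).aestronglyMeasurable
      hX.aemeasurable).mpr hs
  have hs'e : Integrable (fun x => Real.exp (s' * x)) ν :=
    (integrable_map_measure ((measurable_const.mul measurable_id).exp).aestronglyMeasurable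
      hX.aemeasurable).mpr hs'
  set u := s' - s with hudef
  have hu : 0 < u := sub_pos.mpr hlt
  set P := ν.tilted (fun x => s * x) with hPdef
  haveI : IsProbabilityMeasure P := isProbabilityMeasure_tilted hse
  set M := ∫ x, Real.exp (s * x) ∂ν with hMdef
  set M' := ∫ x, Real.exp (s' * x) ∂ν with hM'def
  have hM : 0 < M := integral_exp_pos hse
  have hM' : 0 < M' := integral_exp_pos hs'e
  have hkey : ν.tilted (fun x => s' * x) = P.tilted (fun x => u * x) := by
    rw [hPdef, tilted_tilted hse]
    congr 1
    funext x
    simp only [Pi.add_apply, hudef]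
    ring
  have hmeas_s : Measurable (fun x : ℝ => s * x) := measurable_const.mul measurable_id
  have hmeas_s' : Measurable (fun x : ℝ => s' * x) := measurable_const.mul measurable_id
  -- integrability of exp (u * x) w.r.t. P
  have hgP : Integrable (fun x => Real.exp (u * x)) P := by
    rw [hPdef, my_integrable_tilted_iff ν hmeas_s]
    refine (hs'e.div_const M).congr (ae_of_all _ fun x => ?_)
    show Real.exp (s' * x) / M = Real.exp (u * x) * (Real.exp (s * x) / M)
    rw [← mul_div_assoc, ← Real.exp_add]
    congr 2
    rw [hudef]; ring
  -- integrability of x * exp (u * x) w.r.t. P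
  have hmulP : Integrable (fun x => x * Real.exp (u * x)) P := by
    rw [hPdef, my_integrable_tilted_iff ν hmeas_s]
    have h1 : Integrable (fun x => x * (Real.exp (s' * x) / M')) ν := by
      have := (my_integrable_tilted_iff ν hmeas_s' (fun x => x)).mp hms'
      rwa [← hM'def] at this
    refine ((h1.const_mul (M' / M)).congr (ae_of_all _ fun x => ?_))
    show (M' / M) * (x * (Real.exp (s' * x) / M')) = x * Real.exp (u * x) * (Real.exp (s * x) / M)
    have hx : Real.exp (u * x) * Real.exp (s * x) = Real.exp (s' * x) := by
      rw [← Real.exp_add]; congr 1; rw [hudef]; ring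
    rw [← hx]
    field_simp
  have hidP : Integrable (fun x => x) P := hms
  set N := ∫ x, Real.exp (u * x) ∂P with hNdef
  have hN : 0 < N := integral_exp_pos hgP
  -- mean equality
  have hmean' : ∫ x, x * Real.exp (u * x) ∂P = (∫ x, x ∂P) * N := by
    have e1 : ∫ x, x ∂(ν.tilted (fun x => s' * x))
        = ∫ x, (Real.exp (u * x) / N) * x ∂P := by
      rw [hkey, integral_tilted]
      simp only [smul_eq_mul, hNdef]
    have e2 : ∫ x, (Real.exp (u * x) / N) * x ∂P
        = (∫ x, x * Real.exp (u * x) ∂P) / N := by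
      rw [← integral_div]
      refine integral_congr_ae (ae_of_all _ fun x => ?_)
      ring
    have := hmean
    rw [e1, e2] at this
    field_simp at this ⊢
    have e3 : ∫ x, x * rexp (x * u) ∂P = ∫ x, x * rexp (u * x) ∂P :=
      integral_congr_ae (ae_of_all _ fun x => by simp only [mul_comm x u])
    linarith [this, e3]
  have hsm : StrictMono (fun x : ℝ => Real.exp (u * x)) := fun a b hab =>
    Real.exp_lt_exp.mpr (mul_lt_mul_of_pos_left hab hu)
  obtain ⟨c, hc⟩ := my_ae_eq_const_of_uncorrelated P hsm hidP hgP hmulP hmean'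
  have hcν : ∀ᵐ x ∂ν, x = c := (absolutelyContinuous_tilted hse).ae_le hc
  have e1 : ν.tilted (fun x => s * x) = ν := by
    have : ν.tilted (fun x => s * x) = ν.tilted (fun _ => s * c) :=
      tilted_congr (by filter_upwards [hcν] with x hx; rw [hx])
    rw [this, tilted_const]
  have e2 : ν.tilted (fun x => s' * x) = ν := by
    have : ν.tilted (fun x => s' * x) = ν.tilted (fun _ => s' * c) :=
      tilted_congr (by filter_upwards [hcν] with x hx; rw [hx])
    rw [this, tilted_const]
  rw [hPdef, e1, e2]

/-- (Tilted distributions are determined by their means, real case.)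
If the tilted distributions `X^(s)` and `X^(s̃)` exist and have finite means which are equal,
then they have the same distribution. -/
theorem tilted_eq_of_mean_eq
    {Ω : Type*} [MeasurableSpace Ω] (μ : Measure Ω) [IsProbabilityMeasure μ]
    (X : Ω → ℝ) (hX : Measurable X) (s s' : ℝ)
    (hs : Integrable (fun ω => Real.exp (s * X ω)) μ)
    (hs' : Integrable (fun ω => Real.exp (s' * X ω)) μ)
    (hms : Integrable (fun x => x) ((μ.map X).tilted (fun x => s * x)))
    (hms' : Integrable (fun x => x) ((μ.map X).tilted (fun x => s' * x)))
    (hmean : (∫ x, x ∂((μ.map X).tilted (fun x => s * x)))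
        = ∫ x, x ∂((μ.map X).tilted (fun x => s' * x))) :
    (μ.map X).tilted (fun x => s * x) = (μ.map X).tilted (fun x => s' * x) := by
  rcases lt_trichotomy s s' with h | h | h
  · exact tilted_eq_of_mean_eq_aux μ X hX s s' h hs hs' hms hms' hmean
  · rw [h]
  · exact (tilted_eq_of_mean_eq_aux μ X hX s' s h hs' hs hms' hms hmean.symm).symm
end

section
/- Let X be an ℝ^d-valued random variable, and s, s̃ row vectors for which the tilted distributions X^(s), X^(s̃) exist with finite means. If E[X^(s)] = E[X^(s̃)], then X^(s) = X^(s̃) in distribution. -/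
open MeasureTheory ProbabilityTheory Real
open scoped RealInnerProductSpace

/-- (Tilted distributions are determined by their means, `ℝ^d` case.)
Let `X` be `ℝ^d`-valued, and `s, s̃` (row) vectors such that the tilted distributions
`X^(s)`, `X^(s̃)` (densities `e^{s·x}/M_X(s)` relative to the law of `X`) exist and have
finite means. If the means agree, the tilted distributions are equal. -/
theorem tilted_eq_of_mean_eq_multivariate
    {Ω : Type*} [MeasurableSpace Ω] (μ : Measure Ω) [IsProbabilityMeasure μ]
    {d : ℕ} (X : Ω → EuclideanSpace ℝ (Fin d)) (hX : Measurable X)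
    (s s' : EuclideanSpace ℝ (Fin d))
    (hs : Integrable (fun ω => Real.exp (⟪s, X ω⟫)) μ)
    (hs' : Integrable (fun ω => Real.exp (⟪s', X ω⟫)) μ)
    (hms : Integrable (fun x => x) ((μ.map X).tilted (fun x => ⟪s, x⟫)))
    (hms' : Integrable (fun x => x) ((μ.map X).tilted (fun x => ⟪s', x⟫)))
    (hmean : (∫ x, x ∂((μ.map X).tilted (fun x => ⟪s, x⟫)))
        = ∫ x, x ∂((μ.map X).tilted (fun x => ⟪s', x⟫))) :
    (μ.map X).tilted (fun x => ⟪s, x⟫) = (μ.map X).tilted (fun x => ⟪s', x⟫) := by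
  set ν := μ.map X with hν
  have hνprob : IsProbabilityMeasure ν := Measure.isProbabilityMeasure_map hX.aemeasurable
  set u := s' - s with hu
  set f : EuclideanSpace ℝ (Fin d) → ℝ := fun x => ⟪s, x⟫ with hf
  set g : EuclideanSpace ℝ (Fin d) → ℝ := fun x => ⟪u, x⟫ with hg
  have hgmeas : Measurable g := ((innerSL ℝ u).continuous.measurable)
  have hfg : (fun x : EuclideanSpace ℝ (Fin d) => ⟪s', x⟫) = f + g := by
    funext x
    simp only [hf, hg, hu, Pi.add_apply, inner_sub_left]
    ring
  -- integrability of exponentials under ν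
  have hfν : Integrable (fun x => exp (f x)) ν := by
    have hc : Continuous fun x : EuclideanSpace ℝ (Fin d) => exp (f x) :=
      Real.continuous_exp.comp (innerSL ℝ s).continuous
    rw [hν]
    exact (integrable_map_measure hc.aestronglyMeasurable hX.aemeasurable).mpr hs
  have hf'ν : Integrable (fun x => exp ((f + g) x)) ν := by
    rw [← hfg]
    have hc : Continuous fun x : EuclideanSpace ℝ (Fin d) => exp (⟪s', x⟫) :=
      Real.continuous_exp.comp (innerSL ℝ s').continuous
    rw [hν]
    exact (integrable_map_measure hc.aestronglyMeasurable hX.aemeasurable).mpr hs'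
  set ρ := ν.tilted f with hρ
  have hρprob : IsProbabilityMeasure ρ := isProbabilityMeasure_tilted hfν
  have hρ'prob : IsProbabilityMeasure (ν.tilted (f + g)) := isProbabilityMeasure_tilted hf'ν
  have htt : ρ.tilted g = ν.tilted (f + g) := tilted_tilted hfν g
  -- integrability of exp g under ρ
  have he : Integrable (fun x => exp (g x)) ρ := by
    by_contra h
    have h0 : ρ.tilted g = 0 := tilted_of_not_integrable h
    rw [htt] at h0
    have := hρ'prob.measure_univ
    rw [h0] at this
    simp at this
  set Z := ∫ x, exp (g x) ∂ρ with hZ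
  have hZpos : 0 < Z := integral_exp_pos he
  set c := Real.log Z with hc
  have hec : exp c = Z := Real.exp_log hZpos
  -- g integrable under ρ
  have hgint : Integrable g ρ := by
    have := (innerSL ℝ u).integrable_comp hms
    simpa using this
  -- g integrable under ρ.tilted g
  have hgint' : Integrable g (ρ.tilted g) := by
    rw [htt, ← hfg]
    have := (innerSL ℝ u).integrable_comp hms'
    simpa using this
  -- hence g * exp g integrable under ρ
  have hge : Integrable (fun x => g x * exp (g x)) ρ := by
    have hD : Measurable (fun x => ENNReal.ofReal (exp (g x) / Z)) :=
      ((Real.measurable_exp.comp hgmeas).div_const Z).ennreal_ofReal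
    have hDfin : ∀ᵐ x ∂ρ, ENNReal.ofReal (exp (g x) / Z) < ⊤ :=
      Filter.Eventually.of_forall fun x => ENNReal.ofReal_lt_top
    have h1 : Integrable (fun x => g x * (ENNReal.ofReal (exp (g x) / Z)).toReal) ρ := by
      rw [← integrable_withDensity_iff hD hDfin]
      exact hgint'
    have h2 : Integrable (fun x => g x * (exp (g x) / Z)) ρ := by
      refine h1.congr (Filter.Eventually.of_forall fun x => ?_)
      dsimp only
      rw [ENNReal.toReal_ofReal (by positivity)]
    have h3 := h2.const_mul Z
    refine h3.congr (Filter.Eventually.of_forall fun x => ?_)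
    dsimp only
    field_simp
  -- mean relation
  have hmg : ∫ x, g x ∂ρ = ∫ x, g x ∂(ρ.tilted g) := by
    have h1 := congrArg (innerSL ℝ u) hmean
    rw [← ContinuousLinearMap.integral_comp_comm _ hms,
      ← ContinuousLinearMap.integral_comp_comm _ hms'] at h1
    rw [htt, ← hfg]
    simpa using h1
  have hmg2 : ∫ x, g x * exp (g x) ∂ρ = Z * ∫ x, g x ∂ρ := by
    rw [hmg, integral_tilted g g]
    simp_rw [smul_eq_mul, div_mul_eq_mul_div, mul_comm]
    rw [integral_div, ← hZ]
    field_simp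
  -- the nonnegative function with zero integral
  set h : EuclideanSpace ℝ (Fin d) → ℝ := fun x => (g x - c) * (exp (g x) - exp c) with hh
  have hhnn : 0 ≤ h := by
    intro x
    rcases le_total c (g x) with hle | hle
    · exact mul_nonneg (by linarith) (by simp [Real.exp_le_exp, hle])
    · exact mul_nonneg_iff.mpr (Or.inr ⟨by linarith, by simp [Real.exp_le_exp, hle]⟩)
  have hhint : Integrable h ρ := by
    have : h = fun x => (g x * exp (g x) - c * exp (g x)) - (exp c * g x - c * exp c) := by
      funext x; simp only [hh]; ring
    rw [this]
    exact (hge.sub (he.const_mul c)).sub ((hgint.const_mul _).sub (integrable_const _))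
  have hhzero : ∫ x, h x ∂ρ = 0 := by
    have hrw : h = fun x => (g x * exp (g x) - c * exp (g x)) - (exp c * g x - c * exp c) := by
      funext x; simp only [hh]; ring
    have hint1 : Integrable (fun x => g x * exp (g x) - c * exp (g x)) ρ := by
      exact hge.sub (he.const_mul c)
    have hint2 : Integrable (fun x => exp c * g x - c * exp c) ρ := by
      exact (hgint.const_mul _).sub (integrable_const _)
    have e1 : ∫ x, (g x * exp (g x) - c * exp (g x)) ∂ρ
        = Z * (∫ x, g x ∂ρ) - c * Z := by
      rw [integral_sub hge (he.const_mul c), integral_const_mul, hmg2, ← hZ]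
    have e2 : ∫ x, (exp c * g x - c * exp c) ∂ρ
        = Z * (∫ x, g x ∂ρ) - c * Z := by
      rw [integral_sub (hgint.const_mul _) (integrable_const _), integral_const_mul,
        integral_const, hec]
      simp [mul_comm]
    rw [hrw, integral_sub hint1 hint2, e1, e2, sub_self]
  have hgc : g =ᵐ[ρ] fun _ => c := by
    have := (integral_eq_zero_iff_of_nonneg hhnn hhint).mp hhzero
    filter_upwards [this] with x hx
    simp only [hh, Pi.zero_apply] at hx
    rcases mul_eq_zero.mp hx with h1 | h1
    · linarith [sub_eq_zero.mp h1]
    · exact Real.exp_injective (by linarith [sub_eq_zero.mp h1])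
  have hfinal : ρ.tilted g = ρ := by
    rw [tilted_congr hgc, tilted_const]
  calc ν.tilted f = ρ := rfl
    _ = ρ.tilted g := hfinal.symm
    _ = ν.tilted (f + g) := htt
    _ = ν.tilted (fun x => ⟪s', x⟫) := by rw [hfg]
end

section
/- Let (X_n)_{n=0}^N be a Galton–Watson branching process with offspring CGF K_Y and X₀ = x₀ fixed. Then K_{X₁,…,X_N | X₀=x₀}(s₁,…,s_N) = x₀·K_Y(s₁ + K_Y(s₂ + ⋯ + K_Y(s_{N−1} + K_Y(s_N))⋯)), whenever the nested expressions lie in the domain of K_Y. -/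
open MeasureTheory ProbabilityTheory Real
open scoped ENNReal

namespace GWaux

variable {Ω : Type*} [MeasurableSpace Ω] {μ : Measure Ω} [IsProbabilityMeasure μ]

variable {Ω : Type*} [MeasurableSpace Ω] {μ : Measure Ω} [IsProbabilityMeasure μ]

lemma measurable_X (Y : ℕ → ℕ → Ω → ℕ) (hY : ∀ n j, Measurable (Y n j))
    (X : ℕ → Ω → ℕ) (x₀ : ℕ) (hX0 : ∀ ω, X 0 ω = x₀)
    (hXrec : ∀ n ω, X (n + 1) ω = ∑ j ∈ Finset.range (X n ω), Y (n + 1) j ω) :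
    ∀ n, Measurable (X n) := by
  intro n
  induction n with
  | zero =>
    have : X 0 = fun _ => x₀ := funext hX0
    rw [this]; exact measurable_const
  | succ n ih =>
    apply measurable_to_countable'
    intro r
    have : X (n+1) ⁻¹' {r} =
        ⋃ k, (X n ⁻¹' {k}) ∩ ((fun ω => ∑ j ∈ Finset.range k, Y (n+1) j ω) ⁻¹' {r}) := by
      ext ω
      simp only [Set.mem_preimage, Set.mem_singleton_iff, Set.mem_iUnion, Set.mem_inter_iff]
      constructor
      · intro h; exact ⟨X n ω, rfl, by rw [← hXrec]; exact h⟩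
      · rintro ⟨k, hk, h⟩; rw [hXrec, hk]; exact h
    rw [this]
    exact MeasurableSet.iUnion fun k =>
      (ih (MeasurableSet.singleton k)).inter
        ((Finset.measurable_sum _ fun j _ => hY (n+1) j) (MeasurableSet.singleton r))

lemma row_lintegral (Y : ℕ → ℕ → Ω → ℕ) (hY : ∀ n j, Measurable (Y n j))
    (hindep : iIndepFun (fun p : ℕ × ℕ => Y p.1 p.2) μ)
    (hident : ∀ n j, μ.map (Y n j) = μ.map (Y 0 0))
    {t : ℝ} (ht : Integrable (fun ω => Real.exp (t * (Y 0 0 ω : ℝ))) μ)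
    (n k : ℕ) :
    ∫⁻ ω, ENNReal.ofReal (Real.exp (t * ∑ j ∈ Finset.range k, (Y n j ω : ℝ))) ∂μ
      = ENNReal.ofReal (Real.exp (k * cgf (fun ω => (Y 0 0 ω : ℝ)) μ t)) := by
  set W : Ω → ℝ := fun ω => (Y 0 0 ω : ℝ) with hW
  set Z : ℕ × ℕ → Ω → ℝ := fun p ω => (Y p.1 p.2 ω : ℝ) with hZ
  have hcast : Measurable ((↑) : ℕ → ℝ) := measurable_from_top
  have hZmeas : ∀ p : ℕ × ℕ, Measurable (Z p) := fun p => hcast.comp (hY p.1 p.2)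
  have hZindep : iIndepFun Z μ :=
    hindep.comp (fun _ => ((↑) : ℕ → ℝ)) (fun _ => hcast)
  have hg : Measurable (fun x : ℕ => Real.exp (t * (x : ℝ))) := measurable_from_top
  -- integrability of each coordinate
  have h00 : Integrable (fun x : ℕ => Real.exp (t * (x : ℝ))) (μ.map (Y 0 0)) := by
    refine (integrable_map_measure hg.aestronglyMeasurable (hY 0 0).aemeasurable).mpr ?_
    exact ht
  have hint : ∀ p : ℕ × ℕ, Integrable (fun ω => Real.exp (t * Z p ω)) μ := by
    intro p
    have := (integrable_map_measure hg.aestronglyMeasurable (hY p.1 p.2).aemeasurable).mp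
      (by rw [hident p.1 p.2]; exact h00)
    exact this
  -- mgf of each coordinate
  have hmgf : ∀ p : ℕ × ℕ, mgf (Z p) μ t = mgf W μ t := by
    intro p
    have h1 : mgf (Z p) μ t = ∫ x : ℕ, Real.exp (t * (x : ℝ)) ∂(μ.map (Y p.1 p.2)) := by
      rw [integral_map (hY p.1 p.2).aemeasurable hg.aestronglyMeasurable]; rfl
    have h2 : mgf W μ t = ∫ x : ℕ, Real.exp (t * (x : ℝ)) ∂(μ.map (Y 0 0)) := by
      rw [integral_map (hY 0 0).aemeasurable hg.aestronglyMeasurable]; rfl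
    rw [h1, h2, hident p.1 p.2]
  set s : Finset (ℕ × ℕ) := {n} ×ˢ Finset.range k with hs
  have hsum : (∑ p ∈ s, Z p) = fun ω => ∑ j ∈ Finset.range k, (Y n j ω : ℝ) := by
    funext ω
    simp [hs, Finset.sum_apply, Finset.sum_product, hZ]
  have hintsum : Integrable (fun ω => Real.exp (t * (∑ p ∈ s, Z p) ω)) μ :=
    hZindep.integrable_exp_mul_sum hZmeas (fun p _ => hint p)
  have hmgfsum : mgf (∑ p ∈ s, Z p) μ t = mgf W μ t ^ k := by
    rw [hZindep.mgf_sum hZmeas s, Finset.prod_congr rfl (fun p _ => hmgf p),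
      Finset.prod_const]
    congr 1
    simp [hs]
  have hWint : Integrable (fun ω => Real.exp (t * W ω)) μ := ht
  have hWpos : 0 < mgf W μ t := mgf_pos hWint
  have hrhs : Real.exp ((k : ℝ) * cgf W μ t) = mgf W μ t ^ k := by
    rw [cgf, Real.exp_nat_mul, Real.exp_log hWpos]
  have hnn : 0 ≤ᵐ[μ] fun ω => Real.exp (t * ∑ j ∈ Finset.range k, (Y n j ω : ℝ)) :=
    Filter.Eventually.of_forall fun ω => (Real.exp_pos _).le
  have hintsum' : Integrable (fun ω => Real.exp (t * ∑ j ∈ Finset.range k, (Y n j ω : ℝ))) μ := by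
    have := hintsum
    rw [hsum] at this
    exact this
  rw [← ofReal_integral_eq_lintegral_ofReal hintsum' hnn]
  congr 1
  have : ∫ ω, Real.exp (t * ∑ j ∈ Finset.range k, (Y n j ω : ℝ)) ∂μ
      = mgf (∑ p ∈ s, Z p) μ t := by
    rw [mgf, hsum]
  rw [this, hmgfsum, hrhs]


lemma tsum_indicator_eval {ι : Type*} {Ω' : Type*} [Countable ι] (g : ι → Ω' → ℝ≥0∞)
    (E : ι → Set Ω') (ω : Ω') (k₀ : ι) (h₀ : ω ∈ E k₀) (h : ∀ k, k ≠ k₀ → ω ∉ E k) :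
    ∑' k, (E k).indicator (g k) ω = g k₀ ω := by
  rw [tsum_eq_single k₀ (fun k hk => Set.indicator_of_notMem (h k hk) _)]
  exact Set.indicator_of_mem h₀ _

lemma step (Y : ℕ → ℕ → Ω → ℕ) (hY : ∀ n j, Measurable (Y n j))
    (hindep : iIndepFun (fun p : ℕ × ℕ => Y p.1 p.2) μ)
    (hident : ∀ n j, μ.map (Y n j) = μ.map (Y 0 0))
    (x₀ : ℕ) (X : ℕ → Ω → ℕ)
    (hX0 : ∀ ω, X 0 ω = x₀)
    (hXrec : ∀ n ω, X (n + 1) ω = ∑ j ∈ Finset.range (X n ω), Y (n + 1) j ω)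
    (s : ℕ → ℝ) (m : ℕ) {v : ℝ}
    (hv : Integrable (fun ω => Real.exp (v * (Y 0 0 ω : ℝ))) μ) :
    ∫⁻ ω, ENNReal.ofReal (Real.exp ((∑ n ∈ Finset.range m, s (n + 1) * (X (n + 1) ω : ℝ))
        + v * (X (m + 1) ω : ℝ))) ∂μ
      = ∫⁻ ω, ENNReal.ofReal (Real.exp ((∑ n ∈ Finset.range m, s (n + 1) * (X (n + 1) ω : ℝ))
        + cgf (fun ω => (Y 0 0 ω : ℝ)) μ v * (X m ω : ℝ))) ∂μ := by
  classical
  have hXm := measurable_X Y hY X x₀ hX0 hXrec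
  set K : ℝ := cgf (fun ω => (Y 0 0 ω : ℝ)) μ v with hK
  set prev : (Fin m → ℕ) → ℕ := fun k => if h : 0 < m then k ⟨m - 1, by omega⟩ else x₀ with hprev
  set pk : (Fin m → ℕ) → Fin m → ℕ :=
    fun k i => if h : (i : ℕ) = 0 then x₀ else k ⟨(i : ℕ) - 1, by have := i.isLt; omega⟩ with hpk
  set a : (Fin m → ℕ) → ℝ := fun k => ∑ i : Fin m, s ((i : ℕ) + 1) * (k i : ℝ) with ha
  set E : (Fin m → ℕ) → Set Ω := fun k => {ω | ∀ i : Fin m, X ((i : ℕ) + 1) ω = k i} with hE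
  -- trajectory facts
  have hXprev : ∀ k ω, ω ∈ E k → X m ω = prev k := by
    intro k ω hω
    by_cases h : 0 < m
    · have h2 := hω ⟨m - 1, by omega⟩
      simp only [hprev, dif_pos h]
      rw [← h2]; congr 1
      exact (show m = m - 1 + 1 by omega)
    · have hm : m = 0 := by omega
      simp only [hprev, dif_neg h]
      rw [hm]; exact hX0 ω
  have hmem : ∀ ω, ω ∈ E (fun i : Fin m => X ((i : ℕ) + 1) ω) := fun ω i => rfl
  have hne : ∀ ω, ∀ k, k ≠ (fun i : Fin m => X ((i : ℕ) + 1) ω) → ω ∉ E k := by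
    intro ω k hk hω
    exact hk (funext fun i => (hω i).symm)
  have hE' : ∀ k, E k
      = {ω | ∀ i : Fin m, ∑ j ∈ Finset.range (pk k i), Y ((i : ℕ) + 1) j ω = k i} := by
    intro k; ext ω
    simp only [hE, Set.mem_setOf_eq]
    constructor
    · intro h i
      have hXi : X (i : ℕ) ω = pk k i := by
        by_cases h0 : (i : ℕ) = 0
        · simp only [hpk, dif_pos h0]; rw [h0]; exact hX0 ω
        · simp only [hpk, dif_neg h0]
          have h2 := h ⟨(i : ℕ) - 1, by have := i.isLt; omega⟩
          rw [← h2]; congr 1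
          exact (show (i : ℕ) = (i : ℕ) - 1 + 1 by have := i.isLt; omega)
      rw [← h i, hXrec (i : ℕ) ω, hXi]
    · intro h i
      have main : ∀ r, ∀ hr : r < m, X (r + 1) ω = k ⟨r, hr⟩ := by
        intro r
        induction r using Nat.strong_induction_on with
        | _ r ih =>
          intro hr
          have hXr : X r ω = pk k ⟨r, hr⟩ := by
            by_cases h0 : r = 0
            · simp only [hpk, dif_pos h0]; rw [h0]; exact hX0 ω
            · have hne0 : ¬((⟨r, hr⟩ : Fin m) : ℕ) = 0 := h0
              simp only [hpk, dif_neg hne0]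
              have h2 := ih (r - 1) (by omega) (by omega)
              rw [← h2]; congr 1
              exact (show r = r - 1 + 1 by omega)
          rw [hXrec r ω, hXr]
          exact h ⟨r, hr⟩
      have := main (i : ℕ) i.isLt
      simpa using this
  have hEmeas : ∀ k, MeasurableSet (E k) := by
    intro k
    have : E k = ⋂ i : Fin m, X ((i : ℕ) + 1) ⁻¹' {k i} := by
      ext ω; simp [hE, Set.mem_iInter]
    rw [this]
    exact MeasurableSet.iInter fun i => (hXm _) (measurableSet_singleton _)
  -- the two families of summands
  set g1 : (Fin m → ℕ) → Ω → ℝ≥0∞ := fun k ω => ENNReal.ofReal (Real.exp (a k)) *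
      ENNReal.ofReal (Real.exp (v * ∑ j ∈ Finset.range (prev k), (Y (m + 1) j ω : ℝ))) with hg1
  set g2 : (Fin m → ℕ) → ℝ≥0∞ := fun k =>
      ENNReal.ofReal (Real.exp (a k + K * (prev k : ℝ))) with hg2
  have hg1meas : ∀ k, Measurable (g1 k) := by
    intro k
    exact measurable_const.mul (ENNReal.measurable_ofReal.comp (Real.measurable_exp.comp
      (measurable_const.mul (Finset.measurable_sum _ fun j _ =>
        (measurable_from_top : Measurable ((↑) : ℕ → ℝ)).comp (hY (m + 1) j)))))
  -- pointwise identities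
  have hpt1 : ∀ ω, ENNReal.ofReal (Real.exp ((∑ n ∈ Finset.range m, s (n + 1) * (X (n + 1) ω : ℝ))
      + v * (X (m + 1) ω : ℝ))) = ∑' k, (E k).indicator (g1 k) ω := by
    intro ω
    rw [tsum_indicator_eval g1 E ω (fun i : Fin m => X ((i : ℕ) + 1) ω) (hmem ω) (hne ω)]
    have h1 : a (fun i : Fin m => X ((i : ℕ) + 1) ω)
        = ∑ n ∈ Finset.range m, s (n + 1) * (X (n + 1) ω : ℝ) := by
      simp only [ha]
      exact (Fin.sum_univ_eq_sum_range (fun n => s (n + 1) * (X (n + 1) ω : ℝ)) m)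
    have h2 : prev (fun i : Fin m => X ((i : ℕ) + 1) ω) = X m ω :=
      (hXprev _ ω (hmem ω)).symm
    have h3 : (X (m + 1) ω : ℝ) = ∑ j ∈ Finset.range (X m ω), (Y (m + 1) j ω : ℝ) := by
      rw [hXrec]; push_cast; rfl
    simp only [hg1, h1, h2]
    rw [← ENNReal.ofReal_mul (Real.exp_pos _).le, ← Real.exp_add, h3]
  have hpt2 : ∀ ω, ENNReal.ofReal (Real.exp ((∑ n ∈ Finset.range m, s (n + 1) * (X (n + 1) ω : ℝ))
      + K * (X m ω : ℝ))) = ∑' k, (E k).indicator (fun _ => g2 k) ω := by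
    intro ω
    rw [tsum_indicator_eval (fun k _ => g2 k) E ω (fun i : Fin m => X ((i : ℕ) + 1) ω)
      (hmem ω) (hne ω)]
    have h1 : a (fun i : Fin m => X ((i : ℕ) + 1) ω)
        = ∑ n ∈ Finset.range m, s (n + 1) * (X (n + 1) ω : ℝ) := by
      simp only [ha]
      exact (Fin.sum_univ_eq_sum_range (fun n => s (n + 1) * (X (n + 1) ω : ℝ)) m)
    have h2 : prev (fun i : Fin m => X ((i : ℕ) + 1) ω) = X m ω :=
      (hXprev _ ω (hmem ω)).symm
    simp only [hg2, h1, h2]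
  -- per-k computation
  have hk : ∀ k, ∫⁻ ω, (E k).indicator (g1 k) ω ∂μ
      = ∫⁻ ω, (E k).indicator (fun _ => g2 k) ω ∂μ := by
    intro k
    set M : ℕ := max x₀ (Finset.univ.sup k) with hM
    have hpkle : ∀ i, pk k i ≤ M := by
      intro i
      simp only [hpk]
      split
      · exact le_max_left _ _
      · exact le_trans (Finset.le_sup (Finset.mem_univ _)) (le_max_right _ _)
    set A : Finset (ℕ × ℕ) := Finset.Icc 1 m ×ˢ Finset.range M with hA
    set B : Finset (ℕ × ℕ) := {(m + 1)} ×ˢ Finset.range (prev k) with hB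
    have hdisj : Disjoint A B := by
      rw [Finset.disjoint_left]
      intro p hp hp'
      simp only [hA, hB, Finset.mem_product, Finset.mem_Icc, Finset.mem_singleton] at hp hp'
      omega
    have hIF0 := hindep.indepFun_finset A B hdisj (fun p => hY p.1 p.2)
    -- functions of the coordinates
    set yA : ({x // x ∈ A} → ℕ) → ℕ → ℕ → ℕ :=
      fun y n j => if h : (n, j) ∈ A then y ⟨(n, j), h⟩ else 0 with hyA
    set S : Set ({x // x ∈ A} → ℕ) :=
      {y | ∀ i : Fin m, ∑ j ∈ Finset.range (pk k i), yA y ((i : ℕ) + 1) j = k i} with hS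
    set φ : ({x // x ∈ A} → ℕ) → ℝ≥0∞ :=
      fun y => S.indicator (fun _ => ENNReal.ofReal (Real.exp (a k))) y with hφ
    set yB : ({x // x ∈ B} → ℕ) → ℕ → ℕ :=
      fun y j => if h : (m + 1, j) ∈ B then y ⟨(m + 1, j), h⟩ else 0 with hyB
    set ψ : ({x // x ∈ B} → ℕ) → ℝ≥0∞ :=
      fun y => ENNReal.ofReal (Real.exp (v * ∑ j ∈ Finset.range (prev k), (yB y j : ℝ))) with hψ
    have hyAmeas : ∀ n j, Measurable fun y => yA y n j := by
      intro n j
      by_cases h : (n, j) ∈ A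
      · simp only [hyA, dif_pos h]; exact measurable_pi_apply _
      · simp only [hyA, dif_neg h]; exact measurable_const
    have hyBmeas : ∀ j, Measurable fun y => yB y j := by
      intro j
      by_cases h : (m + 1, j) ∈ B
      · simp only [hyB, dif_pos h]; exact measurable_pi_apply _
      · simp only [hyB, dif_neg h]; exact measurable_const
    have hSmeas : MeasurableSet S := by
      have : S = ⋂ i : Fin m,
          (fun y => ∑ j ∈ Finset.range (pk k i), yA y ((i : ℕ) + 1) j) ⁻¹' {k i} := by
        ext y; simp [hS, Set.mem_iInter]
      rw [this]
      exact MeasurableSet.iInter fun i =>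
        (Finset.measurable_sum _ fun j _ => hyAmeas _ j) (measurableSet_singleton _)
    have hφmeas : Measurable φ := Measurable.indicator measurable_const hSmeas
    have hψmeas : Measurable ψ :=
      ENNReal.measurable_ofReal.comp (Real.measurable_exp.comp (measurable_const.mul
        (Finset.measurable_sum _ fun j _ =>
          (measurable_from_top : Measurable ((↑) : ℕ → ℝ)).comp (hyBmeas j))))
    -- compositions
    have hφcomp : ∀ ω, φ (fun p : {x // x ∈ A} => Y (p : ℕ × ℕ).1 (p : ℕ × ℕ).2 ω)
        = (E k).indicator (fun _ => ENNReal.ofReal (Real.exp (a k))) ω := by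
      intro ω
      have hmemiff : (fun p : {x // x ∈ A} => Y (p : ℕ × ℕ).1 (p : ℕ × ℕ).2 ω) ∈ S ↔ ω ∈ E k := by
        rw [hE' k]
        simp only [hS, Set.mem_setOf_eq]
        apply forall_congr'
        intro i
        have hsum_eq : ∑ j ∈ Finset.range (pk k i),
            yA (fun p : {x // x ∈ A} => Y (p : ℕ × ℕ).1 (p : ℕ × ℕ).2 ω) ((i : ℕ) + 1) j
            = ∑ j ∈ Finset.range (pk k i), Y ((i : ℕ) + 1) j ω := by
          refine Finset.sum_congr rfl fun j hj => ?_
          have hjA : ((i : ℕ) + 1, j) ∈ A :=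
            Finset.mem_product.mpr ⟨Finset.mem_Icc.mpr ⟨by omega, by have := i.isLt; omega⟩,
              Finset.mem_range.mpr (lt_of_lt_of_le (Finset.mem_range.mp hj) (hpkle i))⟩
          simp only [hyA, dif_pos hjA]
        rw [hsum_eq]
      by_cases hω : ω ∈ E k
      · rw [Set.indicator_of_mem hω]
        exact Set.indicator_of_mem (hmemiff.mpr hω) _
      · rw [Set.indicator_of_notMem hω]
        exact Set.indicator_of_notMem (fun hc => hω (hmemiff.mp hc)) _
    have hψcomp : ∀ ω, ψ (fun p : {x // x ∈ B} => Y (p : ℕ × ℕ).1 (p : ℕ × ℕ).2 ω)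
        = ENNReal.ofReal (Real.exp (v * ∑ j ∈ Finset.range (prev k), (Y (m + 1) j ω : ℝ))) := by
      intro ω
      have hsum : ∑ j ∈ Finset.range (prev k),
          ((yB (fun p : {x // x ∈ B} => Y (p : ℕ × ℕ).1 (p : ℕ × ℕ).2 ω) j : ℕ) : ℝ)
          = ∑ j ∈ Finset.range (prev k), (Y (m + 1) j ω : ℝ) := by
        refine Finset.sum_congr rfl fun j hj => ?_
        have hjB : (m + 1, j) ∈ B := Finset.mem_product.mpr ⟨Finset.mem_singleton_self _, hj⟩
        simp only [hyB, dif_pos hjB]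
      show ENNReal.ofReal (Real.exp (v * ∑ j ∈ Finset.range (prev k),
        ((yB (fun p : {x // x ∈ B} => Y (p : ℕ × ℕ).1 (p : ℕ × ℕ).2 ω) j : ℕ) : ℝ))) = _
      rw [hsum]
    have hIndep : IndepFun
        (fun ω => (E k).indicator (fun _ => ENNReal.ofReal (Real.exp (a k))) ω)
        (fun ω => ENNReal.ofReal
          (Real.exp (v * ∑ j ∈ Finset.range (prev k), (Y (m + 1) j ω : ℝ)))) μ := by
      have h := hIF0.comp hφmeas hψmeas
      have e1 : (φ ∘ fun ω (p : {x // x ∈ A}) => Y (p : ℕ × ℕ).1 (p : ℕ × ℕ).2 ω)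
          = fun ω => (E k).indicator (fun _ => ENNReal.ofReal (Real.exp (a k))) ω :=
        funext hφcomp
      have e2 : (ψ ∘ fun ω (p : {x // x ∈ B}) => Y (p : ℕ × ℕ).1 (p : ℕ × ℕ).2 ω)
          = fun ω => ENNReal.ofReal
            (Real.exp (v * ∑ j ∈ Finset.range (prev k), (Y (m + 1) j ω : ℝ))) :=
        funext hψcomp
      rw [e1, e2] at h
      exact h
    have hf1meas : Measurable
        (fun ω => (E k).indicator (fun _ => ENNReal.ofReal (Real.exp (a k))) ω) :=
      Measurable.indicator measurable_const (hEmeas k)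
    have hf2meas : Measurable (fun ω => ENNReal.ofReal
        (Real.exp (v * ∑ j ∈ Finset.range (prev k), (Y (m + 1) j ω : ℝ)))) :=
      ENNReal.measurable_ofReal.comp (Real.measurable_exp.comp (measurable_const.mul
        (Finset.measurable_sum _ fun j _ =>
          (measurable_from_top : Measurable ((↑) : ℕ → ℝ)).comp (hY (m + 1) j))))
    calc ∫⁻ ω, (E k).indicator (g1 k) ω ∂μ
        = ∫⁻ ω, ((E k).indicator (fun _ => ENNReal.ofReal (Real.exp (a k))) ω) *
            ENNReal.ofReal
              (Real.exp (v * ∑ j ∈ Finset.range (prev k), (Y (m + 1) j ω : ℝ))) ∂μ := by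
          refine lintegral_congr fun ω => ?_
          by_cases hω : ω ∈ E k
          · rw [Set.indicator_of_mem hω, Set.indicator_of_mem hω]
          · rw [Set.indicator_of_notMem hω, Set.indicator_of_notMem hω, zero_mul]
      _ = (∫⁻ ω, (E k).indicator (fun _ => ENNReal.ofReal (Real.exp (a k))) ω ∂μ) *
            ∫⁻ ω, ENNReal.ofReal
              (Real.exp (v * ∑ j ∈ Finset.range (prev k), (Y (m + 1) j ω : ℝ))) ∂μ :=
          lintegral_mul_eq_lintegral_mul_lintegral_of_indepFun'' hf1meas.aemeasurable
            hf2meas.aemeasurable hIndep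
      _ = (∫⁻ ω, (E k).indicator (fun _ => ENNReal.ofReal (Real.exp (a k))) ω ∂μ) *
            ENNReal.ofReal (Real.exp ((prev k : ℝ) * K)) := by
          rw [row_lintegral Y hY hindep hident hv (m + 1) (prev k)]
      _ = ∫⁻ ω, ((E k).indicator (fun _ => ENNReal.ofReal (Real.exp (a k))) ω) *
            ENNReal.ofReal (Real.exp ((prev k : ℝ) * K)) ∂μ :=
          (lintegral_mul_const _ hf1meas).symm
      _ = ∫⁻ ω, (E k).indicator (fun _ => g2 k) ω ∂μ := by
          refine lintegral_congr fun ω => ?_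
          by_cases hω : ω ∈ E k
          · rw [Set.indicator_of_mem hω, Set.indicator_of_mem hω, hg2,
              ← ENNReal.ofReal_mul (Real.exp_pos _).le, ← Real.exp_add,
              mul_comm ((prev k : ℝ)) K]
          · rw [Set.indicator_of_notMem hω, Set.indicator_of_notMem hω, zero_mul]
  -- assemble
  calc ∫⁻ ω, ENNReal.ofReal (Real.exp ((∑ n ∈ Finset.range m, s (n + 1) * (X (n + 1) ω : ℝ))
        + v * (X (m + 1) ω : ℝ))) ∂μ
      = ∫⁻ ω, ∑' k, (E k).indicator (g1 k) ω ∂μ := lintegral_congr hpt1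
    _ = ∑' k, ∫⁻ ω, (E k).indicator (g1 k) ω ∂μ :=
        lintegral_tsum fun k => ((hg1meas k).indicator (hEmeas k)).aemeasurable
    _ = ∑' k, ∫⁻ ω, (E k).indicator (fun _ => g2 k) ω ∂μ := tsum_congr hk
    _ = ∫⁻ ω, ∑' k, (E k).indicator (fun _ => g2 k) ω ∂μ :=
        (lintegral_tsum fun k =>
          (Measurable.indicator measurable_const (hEmeas k)).aemeasurable).symm
    _ = ∫⁻ ω, ENNReal.ofReal (Real.exp ((∑ n ∈ Finset.range m, s (n + 1) * (X (n + 1) ω : ℝ))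
        + K * (X m ω : ℝ))) ∂μ := (lintegral_congr hpt2).symm


end GWaux

open GWaux in
/-- For a Galton–Watson branching process `X_n = ∑_{j=1}^{X_{n-1}} Y_n^{(j)}`
started from `X₀ = x₀`, with offspring CGF `K_Y`, the joint CGF of `(X₁,…,X_N)` given
`X₀ = x₀` is the nested expression
`x₀·K_Y(s₁ + K_Y(s₂ + ⋯ + K_Y(s_{N−1} + K_Y(s_N))⋯))`, whenever the nested arguments
(encoded by the backward recursion `u 0 = s_N`, `u (k+1) = s_{N-1-k} + K_Y(u k)`)
lie in the domain of `K_Y`. -/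
theorem cgf_galton_watson_sample_path
    {Ω : Type*} [MeasurableSpace Ω] (μ : Measure Ω) [IsProbabilityMeasure μ]
    (Y : ℕ → ℕ → Ω → ℕ) (hY : ∀ n j, Measurable (Y n j))
    (hindep : iIndepFun (fun p : ℕ × ℕ => Y p.1 p.2) μ)
    (hident : ∀ n j, μ.map (Y n j) = μ.map (Y 0 0))
    (x₀ : ℕ) (X : ℕ → Ω → ℕ)
    (hX0 : ∀ ω, X 0 ω = x₀)
    (hXrec : ∀ n ω, X (n + 1) ω = ∑ j ∈ Finset.range (X n ω), Y (n + 1) j ω)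
    (N : ℕ) (hN : 1 ≤ N) (s : ℕ → ℝ)
    (u : ℕ → ℝ) (hu0 : u 0 = s N)
    (hurec : ∀ k, u (k + 1) = s (N - 1 - k) + cgf (fun ω => (Y 0 0 ω : ℝ)) μ (u k))
    (hdom : ∀ k < N, Integrable (fun ω => Real.exp (u k * (Y 0 0 ω : ℝ))) μ) :
    Real.log (∫ ω, Real.exp (∑ n ∈ Finset.range N, s (n + 1) * (X (n + 1) ω : ℝ)) ∂μ)
      = x₀ * cgf (fun ω => (Y 0 0 ω : ℝ)) μ (u (N - 1)) := by
  obtain ⟨M, rfl⟩ : ∃ M, N = M + 1 := ⟨N - 1, by omega⟩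
  set K : ℝ → ℝ := cgf (fun ω => (Y 0 0 ω : ℝ)) μ with hKdef
  have hXmeas := measurable_X Y hY X x₀ hX0 hXrec
  -- the downward induction
  have Q : ∀ d, d ≤ M →
      ∫⁻ ω, ENNReal.ofReal
          (Real.exp (∑ n ∈ Finset.range (M + 1), s (n + 1) * (X (n + 1) ω : ℝ))) ∂μ
        = ∫⁻ ω, ENNReal.ofReal
            (Real.exp ((∑ n ∈ Finset.range (M - d), s (n + 1) * (X (n + 1) ω : ℝ))
              + K (u d) * (X (M - d) ω : ℝ))) ∂μ := by
    intro d
    induction d with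
    | zero =>
      intro _
      have h1 : ∀ ω, (∑ n ∈ Finset.range (M + 1), s (n + 1) * (X (n + 1) ω : ℝ))
          = (∑ n ∈ Finset.range M, s (n + 1) * (X (n + 1) ω : ℝ))
            + u 0 * (X (M + 1) ω : ℝ) := by
        intro ω
        rw [Finset.sum_range_succ, hu0]
      have h2 := step Y hY hindep hident x₀ X hX0 hXrec s M (hdom 0 (by omega))
      calc ∫⁻ ω, ENNReal.ofReal
            (Real.exp (∑ n ∈ Finset.range (M + 1), s (n + 1) * (X (n + 1) ω : ℝ))) ∂μ
          = ∫⁻ ω, ENNReal.ofReal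
            (Real.exp ((∑ n ∈ Finset.range M, s (n + 1) * (X (n + 1) ω : ℝ))
              + u 0 * (X (M + 1) ω : ℝ))) ∂μ := by
            exact lintegral_congr fun ω => by rw [h1 ω]
        _ = ∫⁻ ω, ENNReal.ofReal
            (Real.exp ((∑ n ∈ Finset.range M, s (n + 1) * (X (n + 1) ω : ℝ))
              + K (u 0) * (X M ω : ℝ))) ∂μ := h2
        _ = ∫⁻ ω, ENNReal.ofReal
            (Real.exp ((∑ n ∈ Finset.range (M - 0), s (n + 1) * (X (n + 1) ω : ℝ))
              + K (u 0) * (X (M - 0) ω : ℝ))) ∂μ := by norm_num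
    | succ d ih =>
      intro hd
      have hd' : d ≤ M := by omega
      have hMd : M - d = (M - d - 1) + 1 := by omega
      set m' : ℕ := M - d - 1 with hm'
      have hcoef : u (d + 1) = s (m' + 1) + K (u d) := by
        rw [hurec d]
        have h3 : M + 1 - 1 - d = m' + 1 := by omega
        rw [h3]
      have h1 : ∀ ω, (∑ n ∈ Finset.range (M - d), s (n + 1) * (X (n + 1) ω : ℝ))
            + K (u d) * (X (M - d) ω : ℝ)
          = (∑ n ∈ Finset.range m', s (n + 1) * (X (n + 1) ω : ℝ))
            + u (d + 1) * (X (m' + 1) ω : ℝ) := by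
        intro ω
        rw [hMd, Finset.sum_range_succ, hcoef]
        ring
      have h2 := step Y hY hindep hident x₀ X hX0 hXrec s m'
        (hdom (d + 1) (by omega))
      rw [ih hd']
      calc ∫⁻ ω, ENNReal.ofReal
            (Real.exp ((∑ n ∈ Finset.range (M - d), s (n + 1) * (X (n + 1) ω : ℝ))
              + K (u d) * (X (M - d) ω : ℝ))) ∂μ
          = ∫⁻ ω, ENNReal.ofReal
            (Real.exp ((∑ n ∈ Finset.range m', s (n + 1) * (X (n + 1) ω : ℝ))
              + u (d + 1) * (X (m' + 1) ω : ℝ))) ∂μ :=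
            lintegral_congr fun ω => by rw [h1 ω]
        _ = ∫⁻ ω, ENNReal.ofReal
            (Real.exp ((∑ n ∈ Finset.range m', s (n + 1) * (X (n + 1) ω : ℝ))
              + K (u (d + 1)) * (X m' ω : ℝ))) ∂μ := h2
        _ = ∫⁻ ω, ENNReal.ofReal
            (Real.exp ((∑ n ∈ Finset.range (M - (d + 1)), s (n + 1) * (X (n + 1) ω : ℝ))
              + K (u (d + 1)) * (X (M - (d + 1)) ω : ℝ))) ∂μ := by
            have : M - (d + 1) = m' := by omega
            rw [this]
  have hQM := Q M le_rfl
  have hfin : ∫⁻ ω, ENNReal.ofReal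
      (Real.exp (∑ n ∈ Finset.range (M + 1), s (n + 1) * (X (n + 1) ω : ℝ))) ∂μ
      = ENNReal.ofReal (Real.exp ((x₀ : ℝ) * K (u M))) := by
    rw [hQM]
    have : ∀ ω, ((∑ n ∈ Finset.range (M - M), s (n + 1) * (X (n + 1) ω : ℝ))
        + K (u M) * (X (M - M) ω : ℝ)) = (x₀ : ℝ) * K (u M) := by
      intro ω
      simp only [Nat.sub_self, Finset.range_zero, Finset.sum_empty, zero_add, hX0 ω]
      ring
    rw [lintegral_congr fun ω => by rw [this ω]]
    simp [lintegral_const]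
  -- convert to Bochner integral
  set g : Ω → ℝ := fun ω => Real.exp (∑ n ∈ Finset.range (M + 1), s (n + 1) * (X (n + 1) ω : ℝ))
    with hg
  have hgmeas : Measurable g :=
    Real.measurable_exp.comp (Finset.measurable_sum _ fun n _ =>
      measurable_const.mul ((measurable_from_top : Measurable ((↑) : ℕ → ℝ)).comp (hXmeas (n + 1))))
  have hgnn : 0 ≤ᵐ[μ] g := Filter.Eventually.of_forall fun ω => (Real.exp_pos _).le
  have hgint : Integrable g μ := by
    refine ⟨hgmeas.aestronglyMeasurable, ?_⟩
    rw [HasFiniteIntegral]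
    have : ∀ ω, (‖g ω‖₊ : ℝ≥0∞) = ENNReal.ofReal (g ω) := fun ω =>
      Real.enorm_eq_ofReal (Real.exp_pos _).le
    calc ∫⁻ ω, (‖g ω‖₊ : ℝ≥0∞) ∂μ = ∫⁻ ω, ENNReal.ofReal (g ω) ∂μ :=
          lintegral_congr fun ω => this ω
      _ = ENNReal.ofReal (Real.exp ((x₀ : ℝ) * K (u M))) := hfin
      _ < ⊤ := ENNReal.ofReal_lt_top
  have hint : ∫ ω, g ω ∂μ = Real.exp ((x₀ : ℝ) * K (u M)) := by
    rw [integral_eq_lintegral_of_nonneg_ae hgnn hgmeas.aestronglyMeasurable, hfin,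
      ENNReal.toReal_ofReal (Real.exp_pos _).le]
  have hM1 : M + 1 - 1 = M := by omega
  rw [hM1]
  calc Real.log (∫ ω, Real.exp (∑ n ∈ Finset.range (M + 1), s (n + 1) * (X (n + 1) ω : ℝ)) ∂μ)
      = Real.log (Real.exp ((x₀ : ℝ) * K (u M))) := by rw [← hg]; rw [hint]
    _ = (x₀ : ℝ) * K (u M) := Real.log_exp _
end

section
/- Let R be an ℝ^D-valued random variable with cumulant generating function K_R finite on an open set. Then either the Hessian K_R''(s) is singular for every s in the interior of the domain (which happens exactly when R is supported on an affine hyperplane of dimension ≤ D−1), or K_R''(s) is positive definite for every such s. -/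
open MeasureTheory Real
open Metric Filter
open scoped Matrix

namespace CGFaux

variable {D : ℕ}

/-- The continuous linear map `v ↦ ∑ i, v i * r i`. -/
noncomputable def L (r : Fin D → ℝ) : (Fin D → ℝ) →L[ℝ] ℝ :=
  ∑ i, r i • ContinuousLinearMap.proj i

lemma L_apply (r v : Fin D → ℝ) : L r v = ∑ i, v i * r i := by
  simp [L, mul_comm]

lemma L_single (r : Fin D → ℝ) (j : Fin D) : L r (Pi.single j 1) = r j := by
  simp [L_apply, Pi.single_apply]

lemma L_norm_le (r : Fin D → ℝ) : ‖L r‖ ≤ ∑ i, |r i| := by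
  refine ContinuousLinearMap.opNorm_le_bound _ (Finset.sum_nonneg fun i _ => abs_nonneg _) ?_
  intro v
  rw [L_apply]
  calc ‖∑ i, v i * r i‖ ≤ ∑ i, ‖v i * r i‖ := norm_sum_le _ _
    _ ≤ ∑ i, |r i| * ‖v‖ := by
        refine Finset.sum_le_sum fun i _ => ?_
        rw [norm_mul, mul_comm]
        exact mul_le_mul_of_nonneg_left (norm_le_pi_norm v i) (abs_nonneg _)
    _ = (∑ i, |r i|) * ‖v‖ := by rw [Finset.sum_mul]




/-- Shift vector with entries `±3δ`. -/
def cvec (δ : ℝ) (t : Finset (Fin D)) : Fin D → ℝ := fun i => if i ∈ t then 3 * δ else -(3 * δ)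

lemma exp_abs_le (a y : ℝ) : Real.exp (a * |y|) ≤ Real.exp (a * y) + Real.exp (-(a * y)) := by
  rcases le_or_gt 0 y with h | h
  · rw [abs_of_nonneg h]
    nlinarith [Real.exp_pos (-(a * y))]
  · rw [abs_of_neg h]
    have : a * -y = -(a * y) := by ring
    rw [this]
    nlinarith [Real.exp_pos (a * y)]

lemma key_bound {δ : ℝ} (hδ : 0 < δ) (hδ1 : δ ≤ 1) (s x r : Fin D → ℝ)
    (hx : ∀ i, |x i - s i| ≤ δ) :
    (1 + ∑ i, |r i|) ^ 2 * Real.exp (∑ i, x i * r i) ≤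
      δ⁻¹ ^ 2 * ∑ t ∈ Finset.univ.powerset,
        Real.exp (∑ i, (s i + cvec δ t i) * r i) := by
  set u : ℝ := ∑ i, |r i| with hu
  have hu0 : 0 ≤ u := Finset.sum_nonneg fun i _ => abs_nonneg _
  have hδi : 1 ≤ δ⁻¹ := by
    rw [le_inv_comm₀ one_pos hδ]; simpa using hδ1
  -- Step 1: (1+u) ≤ δ⁻¹ (1 + δ u)
  have step1 : (1 + u) ≤ δ⁻¹ * (1 + δ * u) := by
    have : δ⁻¹ * (1 + δ * u) = δ⁻¹ + u := by
      field_simp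
    rw [this]; linarith
  -- Step 2 : 1 + δ u ≤ exp (δ u)
  have step2 : 1 + δ * u ≤ Real.exp (δ * u) := by
    have := Real.add_one_le_exp (δ * u); linarith
  -- Step 3 : x·r ≤ s·r + δ u
  have step3 : ∑ i, x i * r i ≤ (∑ i, s i * r i) + δ * u := by
    have : ∑ i, x i * r i - ∑ i, s i * r i = ∑ i, (x i - s i) * r i := by
      rw [← Finset.sum_sub_distrib]; congr 1; funext i; ring
    have hle : ∑ i, (x i - s i) * r i ≤ δ * u := by
      rw [hu, Finset.mul_sum]
      refine Finset.sum_le_sum fun i _ => ?_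
      calc (x i - s i) * r i ≤ |(x i - s i) * r i| := le_abs_self _
        _ = |x i - s i| * |r i| := abs_mul _ _
        _ ≤ δ * |r i| := mul_le_mul_of_nonneg_right (hx i) (abs_nonneg _)
    linarith
  -- combine: LHS ≤ δ⁻¹^2 * exp (s·r + 3δu)
  have main1 : (1 + u) ^ 2 * Real.exp (∑ i, x i * r i) ≤
      δ⁻¹ ^ 2 * Real.exp ((∑ i, s i * r i) + 3 * δ * u) := by
    have h1 : (1 + u) ^ 2 ≤ δ⁻¹ ^ 2 * Real.exp (2 * (δ * u)) := by
      have ha : (1 + u) ^ 2 ≤ (δ⁻¹ * (1 + δ * u)) ^ 2 := by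
        apply pow_le_pow_left₀ (by linarith) step1
      have hb : (δ⁻¹ * (1 + δ * u)) ^ 2 ≤ δ⁻¹ ^ 2 * Real.exp (δ * u) ^ 2 := by
        rw [mul_pow]
        refine mul_le_mul_of_nonneg_left (pow_le_pow_left₀ (by positivity) step2 2) (by positivity)
      calc (1 + u) ^ 2 ≤ δ⁻¹ ^ 2 * Real.exp (δ * u) ^ 2 := ha.trans hb
        _ = δ⁻¹ ^ 2 * Real.exp (2 * (δ * u)) := by
            rw [← Real.exp_nat_mul]; norm_num [mul_comm]
    calc (1 + u) ^ 2 * Real.exp (∑ i, x i * r i)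
        ≤ (δ⁻¹ ^ 2 * Real.exp (2 * (δ * u))) * Real.exp (∑ i, x i * r i) := by
          exact mul_le_mul_of_nonneg_right h1 (Real.exp_pos _).le
      _ = δ⁻¹ ^ 2 * Real.exp (2 * (δ * u) + ∑ i, x i * r i) := by
          rw [mul_assoc, ← Real.exp_add]
      _ ≤ δ⁻¹ ^ 2 * Real.exp ((∑ i, s i * r i) + 3 * δ * u) := by
          refine mul_le_mul_of_nonneg_left (Real.exp_le_exp.2 (by linarith)) (by positivity)
  -- Step 4 : exp (s·r + 3δu) ≤ ∑ over powerset
  have main2 : Real.exp ((∑ i, s i * r i) + 3 * δ * u) ≤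
      ∑ t ∈ Finset.univ.powerset, Real.exp (∑ i, (s i + cvec δ t i) * r i) := by
    have hexp : Real.exp ((∑ i, s i * r i) + 3 * δ * u)
        = ∏ i, (Real.exp (s i * r i) * Real.exp (3 * δ * |r i|)) := by
      rw [hu, Finset.mul_sum, ← Finset.sum_add_distrib, Real.exp_sum]
      congr 1; funext i; rw [Real.exp_add]
    rw [hexp]
    have hfac : ∀ i : Fin D, Real.exp (s i * r i) * Real.exp (3 * δ * |r i|) ≤
        Real.exp ((s i + 3 * δ) * r i) + Real.exp ((s i + -(3 * δ)) * r i) := by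
      intro i
      have := exp_abs_le (3 * δ) (r i)
      calc Real.exp (s i * r i) * Real.exp (3 * δ * |r i|)
          ≤ Real.exp (s i * r i) * (Real.exp (3 * δ * r i) + Real.exp (-(3 * δ * r i))) :=
            mul_le_mul_of_nonneg_left this (Real.exp_pos _).le
        _ = Real.exp ((s i + 3 * δ) * r i) + Real.exp ((s i + -(3 * δ)) * r i) := by
            rw [mul_add, ← Real.exp_add, ← Real.exp_add]
            congr 2 <;> ring
    calc ∏ i, (Real.exp (s i * r i) * Real.exp (3 * δ * |r i|))
        ≤ ∏ i, (Real.exp ((s i + 3 * δ) * r i) + Real.exp ((s i + -(3 * δ)) * r i)) := by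
          refine Finset.prod_le_prod (fun i _ => by positivity) (fun i _ => hfac i)
      _ = ∑ t ∈ Finset.univ.powerset, Real.exp (∑ i, (s i + cvec δ t i) * r i) := by
          rw [Finset.prod_add]
          refine Finset.sum_congr rfl fun t ht => ?_
          rw [← Real.exp_sum, ← Real.exp_sum, ← Real.exp_add]
          congr 1
          rw [← Finset.sum_add_sum_compl t fun i => (s i + cvec δ t i) * r i]
          congr 1
          · exact Finset.sum_congr rfl fun i hi => by simp [cvec, hi]
          · rw [Finset.compl_eq_univ_sdiff]
            exact Finset.sum_congr rfl fun i hi => by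
              simp only [Finset.mem_sdiff] at hi
              simp [cvec, hi.2]
  calc (1 + u) ^ 2 * Real.exp (∑ i, x i * r i)
      ≤ δ⁻¹ ^ 2 * Real.exp ((∑ i, s i * r i) + 3 * δ * u) := main1
    _ ≤ δ⁻¹ ^ 2 * ∑ t ∈ Finset.univ.powerset, Real.exp (∑ i, (s i + cvec δ t i) * r i) :=
        mul_le_mul_of_nonneg_left main2 (by positivity)


end CGFaux

namespace CGFaux2

variable {Ω : Type*} [MeasurableSpace Ω] {μ : Measure Ω} [IsProbabilityMeasure μ]
  {D : ℕ} {R : Ω → Fin D → ℝ}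

lemma meas_exp (hR : Measurable R) (x : Fin D → ℝ) :
    Measurable fun ω => Real.exp (∑ i, x i * R ω i) := by
  apply Real.measurable_exp.comp
  exact Finset.measurable_sum _ fun i _ => (measurable_const.mul ((measurable_pi_apply i).comp hR))

lemma exists_bound (hR : Measurable R) {s : Fin D → ℝ}
    (hs : s ∈ interior {s : Fin D → ℝ |
      Integrable (fun ω => Real.exp (∑ i, s i * R ω i)) μ}) :
    ∃ δ : ℝ, 0 < δ ∧ δ ≤ 1 ∧ ∃ B : Ω → ℝ, Integrable B μ ∧
      ∀ ω, ∀ x : Fin D → ℝ, dist x s ≤ δ →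
        (1 + ∑ i, |R ω i|) ^ 2 * Real.exp (∑ i, x i * R ω i) ≤ B ω := by
  obtain ⟨ε, hε, hball⟩ := Metric.mem_nhds_iff.1 (mem_interior_iff_mem_nhds.1 hs)
  refine ⟨min (ε / 4) 1, by positivity, min_le_right _ _, ?_⟩
  set δ := min (ε / 4) 1 with hδdef
  have hδ : 0 < δ := by positivity
  refine ⟨fun ω => δ⁻¹ ^ 2 * ∑ t ∈ Finset.univ.powerset,
    Real.exp (∑ i, (s i + CGFaux.cvec δ t i) * R ω i), ?_, ?_⟩
  · refine (integrable_finset_sum _ fun t _ => ?_).const_mul _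
    have hmem : (fun i => s i + CGFaux.cvec δ t i) ∈ ball s ε := by
      rw [mem_ball, dist_pi_lt_iff hε]
      intro i
      rw [Real.dist_eq]
      have : |CGFaux.cvec δ t i| ≤ 3 * δ := by
        rcases em (i ∈ t) with h | h <;> simp [CGFaux.cvec, h, abs_of_nonneg, hδ.le, le_refl]
      have h3 : 3 * δ ≤ 3 * (ε / 4) := by
        have := min_le_left (ε / 4) 1; nlinarith
      calc |s i + CGFaux.cvec δ t i - s i| = |CGFaux.cvec δ t i| := by ring_nf
        _ ≤ 3 * δ := this
        _ < ε := by linarith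
    exact hball hmem
  · intro ω x hx
    refine CGFaux.key_bound hδ (min_le_right _ _) s x (R ω) fun i => ?_
    calc |x i - s i| = dist (x i) (s i) := (Real.dist_eq _ _).symm
      _ ≤ dist x s := dist_le_pi_dist x s i
      _ ≤ δ := hx

/-- The workhorse integrability lemma under the domination bound. -/
lemma integrable_dom (hR : Measurable R) {s : Fin D → ℝ} {δ : ℝ} {B : Ω → ℝ}
    (hB : Integrable B μ)
    (hbd : ∀ ω, ∀ x : Fin D → ℝ, dist x s ≤ δ →
      (1 + ∑ i, |R ω i|) ^ 2 * Real.exp (∑ i, x i * R ω i) ≤ B ω)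
    {x : Fin D → ℝ} (hx : dist x s ≤ δ) {φ : Ω → ℝ} (hφm : AEStronglyMeasurable φ μ)
    {C : ℝ} (hC : 0 ≤ C) (hφ : ∀ ω, |φ ω| ≤ C * (1 + ∑ i, |R ω i|) ^ 2) :
    Integrable (fun ω => φ ω * Real.exp (∑ i, x i * R ω i)) μ := by
  refine Integrable.mono' (hB.const_mul C)
    (hφm.mul (meas_exp hR x).aestronglyMeasurable) (ae_of_all _ fun ω => ?_)
  have h1 := hbd ω x hx
  calc ‖φ ω * Real.exp (∑ i, x i * R ω i)‖ = |φ ω| * Real.exp (∑ i, x i * R ω i) := by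
        rw [norm_mul]; simp [abs_of_pos (Real.exp_pos _)]
    _ ≤ C * (1 + ∑ i, |R ω i|) ^ 2 * Real.exp (∑ i, x i * R ω i) :=
        mul_le_mul_of_nonneg_right (hφ ω) (Real.exp_pos _).le
    _ = C * ((1 + ∑ i, |R ω i|) ^ 2 * Real.exp (∑ i, x i * R ω i)) := by ring
    _ ≤ C * B ω := mul_le_mul_of_nonneg_left h1 hC

end CGFaux2

namespace CGFaux2

noncomputable def Llin {D : ℕ} : (Fin D → ℝ) →ₗ[ℝ] ((Fin D → ℝ) →L[ℝ] ℝ) where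
  toFun := CGFaux.L
  map_add' x y := by simp [CGFaux.L, add_smul, Finset.sum_add_distrib]
  map_smul' c x := by simp [CGFaux.L, smul_smul, Finset.smul_sum]

lemma continuous_L {D : ℕ} : Continuous (CGFaux.L : (Fin D → ℝ) → ((Fin D → ℝ) →L[ℝ] ℝ)) :=
  (Llin : (Fin D → ℝ) →ₗ[ℝ] _).continuous_of_finiteDimensional

lemma hasFDerivAt_exp_dot {D : ℕ} (r : Fin D → ℝ) (x : Fin D → ℝ) :
    HasFDerivAt (fun y : Fin D → ℝ => Real.exp (∑ i, y i * r i))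
      (Real.exp (∑ i, x i * r i) • CGFaux.L r) x := by
  have h : HasFDerivAt (fun y : Fin D → ℝ => CGFaux.L r y) (CGFaux.L r) x :=
    (CGFaux.L r).hasFDerivAt
  have h2 := h.exp
  simp only [CGFaux.L_apply] at h2
  exact h2

variable {Ω : Type*} [MeasurableSpace Ω] {μ : Measure Ω} [IsProbabilityMeasure μ]
  {D : ℕ} {R : Ω → Fin D → ℝ}

lemma aesm_smul_L (hR : Measurable R) {φ : Ω → ℝ} (hφm : AEStronglyMeasurable φ μ)
    (x : Fin D → ℝ) :
    AEStronglyMeasurable (fun ω => (φ ω * Real.exp (∑ i, x i * R ω i)) • CGFaux.L (R ω)) μ :=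
  (hφm.mul (meas_exp hR x).aestronglyMeasurable).smul
    (continuous_L.comp_aestronglyMeasurable hR.aestronglyMeasurable)

lemma norm_smul_L_le {φ : Ω → ℝ} {C : ℝ} (hC : 0 ≤ C)
    (hφ : ∀ ω, |φ ω| ≤ C * (1 + ∑ i, |R ω i|)) (x : Fin D → ℝ) (ω : Ω) :
    ‖(φ ω * Real.exp (∑ i, x i * R ω i)) • CGFaux.L (R ω)‖ ≤
      C * ((1 + ∑ i, |R ω i|) ^ 2 * Real.exp (∑ i, x i * R ω i)) := by
  set u : ℝ := ∑ i, |R ω i| with hu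
  have hu0 : 0 ≤ u := Finset.sum_nonneg fun i _ => abs_nonneg _
  rw [norm_smul (φ ω * Real.exp (∑ i, x i * R ω i)) (CGFaux.L (R ω))]
  calc ‖φ ω * Real.exp (∑ i, x i * R ω i)‖ * ‖CGFaux.L (R ω)‖
      ≤ (C * (1 + u) * Real.exp (∑ i, x i * R ω i)) * u := by
        refine mul_le_mul ?_ (CGFaux.L_norm_le _) (norm_nonneg _) (by positivity)
        rw [norm_mul, Real.norm_eq_abs, Real.norm_eq_abs, abs_of_pos (Real.exp_pos _)]
        exact mul_le_mul_of_nonneg_right (hφ ω) (Real.exp_pos _).le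
    _ ≤ C * ((1 + u) ^ 2 * Real.exp (∑ i, x i * R ω i)) := by
        have h1 : C * (1 + u) * Real.exp (∑ i, x i * R ω i) * u
            = C * (((1 + u) * u) * Real.exp (∑ i, x i * R ω i)) := by ring
        rw [h1]
        refine mul_le_mul_of_nonneg_left ?_ hC
        refine mul_le_mul_of_nonneg_right ?_ (Real.exp_pos _).le
        nlinarith

lemma integrable_smul_L (hR : Measurable R) {s : Fin D → ℝ} {δ : ℝ} {B : Ω → ℝ}
    (hB : Integrable B μ)
    (hbd : ∀ ω, ∀ x : Fin D → ℝ, dist x s ≤ δ →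
      (1 + ∑ i, |R ω i|) ^ 2 * Real.exp (∑ i, x i * R ω i) ≤ B ω)
    {x : Fin D → ℝ} (hx : dist x s ≤ δ) {φ : Ω → ℝ} (hφm : AEStronglyMeasurable φ μ)
    {C : ℝ} (hC : 0 ≤ C) (hφ : ∀ ω, |φ ω| ≤ C * (1 + ∑ i, |R ω i|)) :
    Integrable (fun ω => (φ ω * Real.exp (∑ i, x i * R ω i)) • CGFaux.L (R ω)) μ := by
  refine Integrable.mono' (hB.const_mul C) (aesm_smul_L hR hφm x) (ae_of_all _ fun ω => ?_)
  exact (norm_smul_L_le hC hφ x ω).trans (mul_le_mul_of_nonneg_left (hbd ω x hx) hC)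

lemma hasFDerivAt_integral (hR : Measurable R) {s : Fin D → ℝ} {δ : ℝ} {B : Ω → ℝ}
    (hδ : 0 < δ) (hB : Integrable B μ)
    (hbd : ∀ ω, ∀ x : Fin D → ℝ, dist x s ≤ δ →
      (1 + ∑ i, |R ω i|) ^ 2 * Real.exp (∑ i, x i * R ω i) ≤ B ω)
    {φ : Ω → ℝ} (hφm : AEStronglyMeasurable φ μ)
    {C : ℝ} (hC : 0 ≤ C) (hφ : ∀ ω, |φ ω| ≤ C * (1 + ∑ i, |R ω i|)) :
    HasFDerivAt (fun y => ∫ ω, φ ω * Real.exp (∑ i, y i * R ω i) ∂μ)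
      (∫ ω, (φ ω * Real.exp (∑ i, s i * R ω i)) • CGFaux.L (R ω) ∂μ) s := by
  have hφ2 : ∀ ω, |φ ω| ≤ C * (1 + ∑ i, |R ω i|) ^ 2 := by
    intro ω
    have hu0 : (0:ℝ) ≤ ∑ i, |R ω i| := Finset.sum_nonneg fun i _ => abs_nonneg _
    refine (hφ ω).trans (mul_le_mul_of_nonneg_left ?_ hC)
    nlinarith
  have hss : dist s s ≤ δ := by simp [hδ.le]
  have h1 : ∀ᶠ x in nhds s, AEStronglyMeasurable
      (fun ω => φ ω * Real.exp (∑ i, x i * R ω i)) μ :=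
    Eventually.of_forall fun x => hφm.mul (meas_exp hR x).aestronglyMeasurable
  have h2 : Integrable (fun ω => φ ω * Real.exp (∑ i, s i * R ω i)) μ :=
    integrable_dom hR hB hbd hss hφm hC hφ2
  have h3 : AEStronglyMeasurable
      (fun ω => (φ ω * Real.exp (∑ i, s i * R ω i)) • CGFaux.L (R ω)) μ :=
    aesm_smul_L hR hφm s
  have h4 : ∀ᵐ ω ∂μ, ∀ x ∈ ball s δ,
      ‖(φ ω * Real.exp (∑ i, x i * R ω i)) • CGFaux.L (R ω)‖ ≤ C * B ω :=
    ae_of_all _ fun ω x hx => (norm_smul_L_le hC hφ x ω).trans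
      (mul_le_mul_of_nonneg_left (hbd ω x (mem_ball.1 hx).le) hC)
  have h5 : Integrable (fun ω => C * B ω) μ := hB.const_mul C
  have h6 : ∀ᵐ ω ∂μ, ∀ x ∈ ball s δ,
      HasFDerivAt (fun y => φ ω * Real.exp (∑ i, y i * R ω i))
        ((φ ω * Real.exp (∑ i, x i * R ω i)) • CGFaux.L (R ω)) x := by
    refine ae_of_all _ fun ω x _ => ?_
    have h := (hasFDerivAt_exp_dot (R ω) x).const_mul (φ ω)
    simpa [smul_smul] using h
  exact hasFDerivAt_integral_of_dominated_of_fderiv_le (ball_mem_nhds s hδ) h1 h2 h3 h4 h5 h6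

end CGFaux2

namespace CGFaux2

variable {Ω : Type*} [MeasurableSpace Ω] {μ : Measure Ω} [IsProbabilityMeasure μ]
  {D : ℕ} {R : Ω → Fin D → ℝ}

lemma abs_one_le (ω : Ω) : |(1:ℝ)| ≤ 1 * (1 + ∑ i, |R ω i|) := by
  have hu0 : (0:ℝ) ≤ ∑ i, |R ω i| := Finset.sum_nonneg fun i _ => abs_nonneg _
  rw [abs_one, one_mul]; linarith

lemma abs_R_le (j : Fin D) (ω : Ω) : |R ω j| ≤ 1 * (1 + ∑ i, |R ω i|) := by
  have h1 : |R ω j| ≤ ∑ i, |R ω i| :=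
    Finset.single_le_sum (f := fun i => |R ω i|) (fun i _ => abs_nonneg _) (Finset.mem_univ j)
  have hu0 : (0:ℝ) ≤ ∑ i, |R ω i| := Finset.sum_nonneg fun i _ => abs_nonneg _
  rw [one_mul]; linarith

lemma fderiv_log_integral (hR : Measurable R) {s : Fin D → ℝ}
    (hs : s ∈ interior {s : Fin D → ℝ |
      Integrable (fun ω => Real.exp (∑ i, s i * R ω i)) μ}) (j : Fin D) :
    fderiv ℝ (fun y => Real.log (∫ ω, Real.exp (∑ i, y i * R ω i) ∂μ)) s (Pi.single j 1)
      = (∫ ω, R ω j * Real.exp (∑ i, s i * R ω i) ∂μ) /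
        (∫ ω, Real.exp (∑ i, s i * R ω i) ∂μ) := by
  obtain ⟨δ, hδ, hδ1, B, hB, hbd⟩ := exists_bound hR hs
  have hss : dist s s ≤ δ := by simp [hδ.le]
  have hZd := hasFDerivAt_integral (φ := fun _ => (1:ℝ)) hR hδ hB hbd
    aestronglyMeasurable_const zero_le_one (abs_one_le (R := R))
  simp only [one_mul] at hZd
  have hsS : s ∈ {s : Fin D → ℝ | Integrable (fun ω => Real.exp (∑ i, s i * R ω i)) μ} :=
    interior_subset hs
  have hint : Integrable (fun ω => Real.exp (∑ i, s i * R ω i)) μ := hsS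
  have hZpos : 0 < ∫ ω, Real.exp (∑ i, s i * R ω i) ∂μ := integral_exp_pos hint
  have hK := hZd.log hZpos.ne'
  rw [hK.fderiv]
  have hintL : Integrable (fun ω => Real.exp (∑ i, s i * R ω i) • CGFaux.L (R ω)) μ := by
    have := integrable_smul_L hR hB hbd hss aestronglyMeasurable_const zero_le_one
      (abs_one_le (R := R))
    simpa [one_mul] using this
  rw [ContinuousLinearMap.smul_apply, ContinuousLinearMap.integral_apply hintL]
  simp only [ContinuousLinearMap.smul_apply, CGFaux.L_single, smul_eq_mul]
  rw [div_eq_inv_mul]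
  congr 1
  exact integral_congr_ae (ae_of_all _ fun ω => mul_comm _ _)

lemma hessian_entry (hR : Measurable R) {s : Fin D → ℝ}
    (hs : s ∈ interior {s : Fin D → ℝ |
      Integrable (fun ω => Real.exp (∑ i, s i * R ω i)) μ}) (i j : Fin D) :
    fderiv ℝ (fun x => fderiv ℝ
        (fun y => Real.log (∫ ω, Real.exp (∑ k, y k * R ω k) ∂μ)) x (Pi.single j 1))
      s (Pi.single i 1)
      = (∫ ω, R ω i * R ω j * Real.exp (∑ k, s k * R ω k) ∂μ) /
          (∫ ω, Real.exp (∑ k, s k * R ω k) ∂μ)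
        - (∫ ω, R ω j * Real.exp (∑ k, s k * R ω k) ∂μ) /
            (∫ ω, Real.exp (∑ k, s k * R ω k) ∂μ)
          * ((∫ ω, R ω i * Real.exp (∑ k, s k * R ω k) ∂μ) /
            (∫ ω, Real.exp (∑ k, s k * R ω k) ∂μ)) := by
  have heq : (fun x => fderiv ℝ
      (fun y => Real.log (∫ ω, Real.exp (∑ k, y k * R ω k) ∂μ)) x (Pi.single j 1))
      =ᶠ[nhds s] fun x => (∫ ω, R ω j * Real.exp (∑ k, x k * R ω k) ∂μ) *
        (∫ ω, Real.exp (∑ k, x k * R ω k) ∂μ)⁻¹ := by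
    refine Filter.eventuallyEq_of_mem (isOpen_interior.mem_nhds hs) fun x hx => ?_
    rw [fderiv_log_integral hR hx j, div_eq_mul_inv]
  rw [heq.fderiv_eq]
  obtain ⟨δ, hδ, hδ1, B, hB, hbd⟩ := exists_bound hR hs
  have hss : dist s s ≤ δ := by simp [hδ.le]
  have hZd := hasFDerivAt_integral (φ := fun _ => (1:ℝ)) hR hδ hB hbd
    aestronglyMeasurable_const zero_le_one (abs_one_le (R := R))
  simp only [one_mul] at hZd
  have hNd := hasFDerivAt_integral (φ := fun ω => R ω j) hR hδ hB hbd
    ((measurable_pi_apply j).comp hR).aestronglyMeasurable zero_le_one (abs_R_le j)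
  have hsS : s ∈ {s : Fin D → ℝ | Integrable (fun ω => Real.exp (∑ i, s i * R ω i)) μ} :=
    interior_subset hs
  have hint : Integrable (fun ω => Real.exp (∑ k, s k * R ω k)) μ := hsS
  have hZpos : 0 < ∫ ω, Real.exp (∑ k, s k * R ω k) ∂μ := integral_exp_pos hint
  have hinv : HasFDerivAt (fun y => (∫ ω, Real.exp (∑ k, y k * R ω k) ∂μ)⁻¹)
      (-((∫ ω, Real.exp (∑ k, s k * R ω k) ∂μ) ^ 2)⁻¹ •
        ∫ ω, Real.exp (∑ k, s k * R ω k) • CGFaux.L (R ω) ∂μ) s :=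
    (hasDerivAt_inv hZpos.ne').comp_hasFDerivAt s hZd
  have hNd' : HasFDerivAt (fun y => ∫ ω, R ω j * Real.exp (∑ k, y k * R ω k) ∂μ)
      (∫ ω, (R ω j * Real.exp (∑ k, s k * R ω k)) • CGFaux.L (R ω) ∂μ) s := hNd
  have hprod : HasFDerivAt (fun y => (∫ ω, R ω j * Real.exp (∑ k, y k * R ω k) ∂μ) *
      (∫ ω, Real.exp (∑ k, y k * R ω k) ∂μ)⁻¹) _ s := hNd'.mul hinv
  rw [hprod.fderiv]
  have hintL : Integrable (fun ω => Real.exp (∑ k, s k * R ω k) • CGFaux.L (R ω)) μ := by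
    have := integrable_smul_L hR hB hbd hss aestronglyMeasurable_const zero_le_one
      (abs_one_le (R := R))
    simpa [one_mul] using this
  have hintLj : Integrable
      (fun ω => (R ω j * Real.exp (∑ k, s k * R ω k)) • CGFaux.L (R ω)) μ :=
    integrable_smul_L hR hB hbd hss ((measurable_pi_apply j).comp hR).aestronglyMeasurable
      zero_le_one (abs_R_le j)
  rw [ContinuousLinearMap.add_apply, ContinuousLinearMap.smul_apply,
    ContinuousLinearMap.smul_apply, ContinuousLinearMap.smul_apply,
    ContinuousLinearMap.integral_apply hintL, ContinuousLinearMap.integral_apply hintLj]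
  simp only [ContinuousLinearMap.smul_apply, CGFaux.L_single, smul_eq_mul]
  have e1 : ∫ ω, Real.exp (∑ k, s k * R ω k) * R ω i ∂μ
      = ∫ ω, R ω i * Real.exp (∑ k, s k * R ω k) ∂μ :=
    integral_congr_ae (ae_of_all _ fun ω => mul_comm _ _)
  have e2 : ∫ ω, R ω j * Real.exp (∑ k, s k * R ω k) * R ω i ∂μ
      = ∫ ω, R ω i * R ω j * Real.exp (∑ k, s k * R ω k) ∂μ :=
    integral_congr_ae (ae_of_all _ fun ω => by ring)
  rw [e1, e2]
  set Z := ∫ ω, Real.exp (∑ k, s k * R ω k) ∂μ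
  set A := ∫ ω, R ω i * R ω j * Real.exp (∑ k, s k * R ω k) ∂μ
  set mi := ∫ ω, R ω i * Real.exp (∑ k, s k * R ω k) ∂μ
  set mj := ∫ ω, R ω j * Real.exp (∑ k, s k * R ω k) ∂μ
  field_simp
  ring

end CGFaux2

namespace CGFaux2

variable {Ω : Type*} [MeasurableSpace Ω] {μ : Measure Ω} [IsProbabilityMeasure μ]
  {D : ℕ} {R : Ω → Fin D → ℝ}

variable (μ R) in
noncomputable def Zf (s : Fin D → ℝ) : ℝ := ∫ ω, Real.exp (∑ k, s k * R ω k) ∂μ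

variable (μ R) in
noncomputable def Hent (s : Fin D → ℝ) (i j : Fin D) : ℝ :=
  (∫ ω, R ω i * R ω j * Real.exp (∑ k, s k * R ω k) ∂μ) / Zf μ R s
    - (∫ ω, R ω j * Real.exp (∑ k, s k * R ω k) ∂μ) / Zf μ R s
      * ((∫ ω, R ω i * Real.exp (∑ k, s k * R ω k) ∂μ) / Zf μ R s)

variable (μ R) in
noncomputable def mV (s v : Fin D → ℝ) : ℝ :=
  (∫ ω, (∑ k, v k * R ω k) * Real.exp (∑ k, s k * R ω k) ∂μ) / Zf μ R s

variable (μ R) in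
noncomputable def QV (s v : Fin D → ℝ) : ℝ :=
  ∫ ω, ((∑ k, v k * R ω k) - mV μ R s v) ^ 2 * Real.exp (∑ k, s k * R ω k) ∂μ

lemma hessian_entry' (hR : Measurable R) {s : Fin D → ℝ}
    (hs : s ∈ interior {s : Fin D → ℝ |
      Integrable (fun ω => Real.exp (∑ i, s i * R ω i)) μ}) (i j : Fin D) :
    fderiv ℝ (fun x => fderiv ℝ
        (fun y => Real.log (∫ ω, Real.exp (∑ k, y k * R ω k) ∂μ)) x (Pi.single j 1))
      s (Pi.single i 1) = Hent μ R s i j :=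
  hessian_entry hR hs i j

section Quad

variable (hR : Measurable R) {s : Fin D → ℝ}
  (hs : s ∈ interior {s : Fin D → ℝ |
    Integrable (fun ω => Real.exp (∑ i, s i * R ω i)) μ})

include hR hs

lemma Zf_pos : 0 < Zf μ R s := by
  have hsS : s ∈ {s : Fin D → ℝ | Integrable (fun ω => Real.exp (∑ i, s i * R ω i)) μ} :=
    interior_subset hs
  exact integral_exp_pos hsS

/-- Integrability of `φ · e^{s·R}` for any measurable `φ` of quadratic growth in `R`. -/
lemma integrable_poly {φ : Ω → ℝ} (hφm : AEStronglyMeasurable φ μ) {C : ℝ} (hC : 0 ≤ C)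
    (hφ : ∀ ω, |φ ω| ≤ C * (1 + ∑ i, |R ω i|) ^ 2) :
    Integrable (fun ω => φ ω * Real.exp (∑ k, s k * R ω k)) μ := by
  obtain ⟨δ, hδ, hδ1, B, hB, hbd⟩ := exists_bound hR hs
  exact integrable_dom hR hB hbd (by simp [hδ.le]) hφm hC hφ

lemma integrable_Rij (i j : Fin D) :
    Integrable (fun ω => R ω i * R ω j * Real.exp (∑ k, s k * R ω k)) μ := by
  refine integrable_poly hR hs
    (((measurable_pi_apply i).comp hR).mul ((measurable_pi_apply j).comp hR)).aestronglyMeasurable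
    zero_le_one fun ω => ?_
  have hu0 : (0:ℝ) ≤ ∑ k, |R ω k| := Finset.sum_nonneg fun k _ => abs_nonneg _
  have hi : |R ω i| ≤ ∑ k, |R ω k| :=
    Finset.single_le_sum (f := fun k => |R ω k|) (fun k _ => abs_nonneg _) (Finset.mem_univ i)
  have hj : |R ω j| ≤ ∑ k, |R ω k| :=
    Finset.single_le_sum (f := fun k => |R ω k|) (fun k _ => abs_nonneg _) (Finset.mem_univ j)
  rw [abs_mul]
  nlinarith [abs_nonneg (R ω i), abs_nonneg (R ω j)]

lemma integrable_Ri (i : Fin D) :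
    Integrable (fun ω => R ω i * Real.exp (∑ k, s k * R ω k)) μ := by
  refine integrable_poly hR hs ((measurable_pi_apply i).comp hR).aestronglyMeasurable
    zero_le_one fun ω => ?_
  have hu0 : (0:ℝ) ≤ ∑ k, |R ω k| := Finset.sum_nonneg fun k _ => abs_nonneg _
  have hi : |R ω i| ≤ ∑ k, |R ω k| :=
    Finset.single_le_sum (f := fun k => |R ω k|) (fun k _ => abs_nonneg _) (Finset.mem_univ i)
  nlinarith

lemma meas_g (v : Fin D → ℝ) : Measurable fun ω => ∑ k, v k * R ω k :=
  Finset.measurable_sum _ fun k _ => measurable_const.mul ((measurable_pi_apply k).comp hR)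

lemma abs_g_le (v : Fin D → ℝ) (ω : Ω) :
    |∑ k, v k * R ω k| ≤ (∑ k, |v k|) * ∑ k, |R ω k| := by
  calc |∑ k, v k * R ω k| ≤ ∑ k, |v k * R ω k| := Finset.abs_sum_le_sum_abs _ _
    _ ≤ ∑ k, |v k| * ∑ l, |R ω l| := by
        refine Finset.sum_le_sum fun k _ => ?_
        rw [abs_mul]
        refine mul_le_mul_of_nonneg_left ?_ (abs_nonneg _)
        exact Finset.single_le_sum (f := fun l => |R ω l|) (fun l _ => abs_nonneg _)
          (Finset.mem_univ k)
    _ = (∑ k, |v k|) * ∑ k, |R ω k| := by rw [Finset.sum_mul]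

lemma integrable_ge (v : Fin D → ℝ) :
    Integrable (fun ω => (∑ k, v k * R ω k) * Real.exp (∑ k, s k * R ω k)) μ := by
  refine integrable_poly hR hs (meas_g hR hs v).aestronglyMeasurable
    (C := ∑ k, |v k|) (Finset.sum_nonneg fun k _ => abs_nonneg _) fun ω => ?_
  have hu0 : (0:ℝ) ≤ ∑ k, |R ω k| := Finset.sum_nonneg fun k _ => abs_nonneg _
  have hv0 : (0:ℝ) ≤ ∑ k, |v k| := Finset.sum_nonneg fun k _ => abs_nonneg _
  have := abs_g_le hR hs v ω
  nlinarith [mul_nonneg hv0 hu0, mul_nonneg hv0 (sq_nonneg (∑ k, |R ω k|))]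

lemma integrable_g2e (v : Fin D → ℝ) :
    Integrable (fun ω => (∑ k, v k * R ω k) ^ 2 * Real.exp (∑ k, s k * R ω k)) μ := by
  refine integrable_poly hR hs ((meas_g hR hs v).pow_const 2).aestronglyMeasurable
    (C := (∑ k, |v k|) ^ 2) (by positivity) fun ω => ?_
  have hu0 : (0:ℝ) ≤ ∑ k, |R ω k| := Finset.sum_nonneg fun k _ => abs_nonneg _
  have hv0 : (0:ℝ) ≤ ∑ k, |v k| := Finset.sum_nonneg fun k _ => abs_nonneg _
  have h := abs_g_le hR hs v ω
  have h2 : |(∑ k, v k * R ω k) ^ 2| = |∑ k, v k * R ω k| ^ 2 := by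
    rw [abs_pow]
  rw [h2]
  nlinarith [abs_nonneg (∑ k, v k * R ω k)]

lemma integrable_gme2 (v : Fin D → ℝ) (m : ℝ) :
    Integrable (fun ω => ((∑ k, v k * R ω k) - m) ^ 2 * Real.exp (∑ k, s k * R ω k)) μ := by
  refine integrable_poly hR hs (((meas_g hR hs v).sub_const m).pow_const 2).aestronglyMeasurable
    (C := ((∑ k, |v k|) + |m|) ^ 2) (by positivity) fun ω => ?_
  have hu0 : (0:ℝ) ≤ ∑ k, |R ω k| := Finset.sum_nonneg fun k _ => abs_nonneg _
  have hv0 : (0:ℝ) ≤ ∑ k, |v k| := Finset.sum_nonneg fun k _ => abs_nonneg _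
  have h := abs_g_le hR hs v ω
  have h3 : |(∑ k, v k * R ω k) - m| ≤ |∑ k, v k * R ω k| + |m| := abs_sub _ _
  have h2 : |((∑ k, v k * R ω k) - m) ^ 2| = |(∑ k, v k * R ω k) - m| ^ 2 := by rw [abs_pow]
  rw [h2]
  have h4 : |(∑ k, v k * R ω k) - m| ≤ ((∑ k, |v k|) + |m|) * (1 + ∑ k, |R ω k|) := by
    nlinarith [abs_nonneg m, mul_nonneg (abs_nonneg m) hu0]
  calc |(∑ k, v k * R ω k) - m| ^ 2 ≤ (((∑ k, |v k|) + |m|) * (1 + ∑ k, |R ω k|)) ^ 2 :=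
        pow_le_pow_left₀ (abs_nonneg _) h4 2
    _ = ((∑ k, |v k|) + |m|) ^ 2 * (1 + ∑ k, |R ω k|) ^ 2 := mul_pow _ _ 2

end Quad

end CGFaux2

namespace CGFaux2

variable {Ω : Type*} [MeasurableSpace Ω] {μ : Measure Ω} [IsProbabilityMeasure μ]
  {D : ℕ} {R : Ω → Fin D → ℝ}

open scoped Matrix in
lemma Hent_symm (s : Fin D → ℝ) (i j : Fin D) : Hent μ R s i j = Hent μ R s j i := by
  unfold Hent
  rw [show (∫ ω, R ω i * R ω j * Real.exp (∑ k, s k * R ω k) ∂μ)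
      = ∫ ω, R ω j * R ω i * Real.exp (∑ k, s k * R ω k) ∂μ from
    integral_congr_ae (ae_of_all _ fun ω => by ring)]
  ring

section Quad2

variable (hR : Measurable R) {s : Fin D → ℝ}
  (hs : s ∈ interior {s : Fin D → ℝ |
    Integrable (fun ω => Real.exp (∑ i, s i * R ω i)) μ})

include hR hs

lemma integral_ge_eq (v : Fin D → ℝ) :
    ∫ ω, (∑ k, v k * R ω k) * Real.exp (∑ k, s k * R ω k) ∂μ
      = ∑ k, v k * ∫ ω, R ω k * Real.exp (∑ l, s l * R ω l) ∂μ := by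
  have h1 : (fun ω => (∑ k, v k * R ω k) * Real.exp (∑ k, s k * R ω k))
      = fun ω => ∑ k, v k * (R ω k * Real.exp (∑ l, s l * R ω l)) := by
    funext ω; rw [Finset.sum_mul]; exact Finset.sum_congr rfl fun k _ => by ring
  rw [h1, integral_finset_sum _ fun k _ => ((integrable_Ri hR hs k).const_mul (v k))]
  exact Finset.sum_congr rfl fun k _ => integral_const_mul _ _

lemma integral_g2e_eq (v : Fin D → ℝ) :
    ∫ ω, (∑ k, v k * R ω k) ^ 2 * Real.exp (∑ k, s k * R ω k) ∂μ
      = ∑ i, ∑ j, v i * v j * ∫ ω, R ω i * R ω j * Real.exp (∑ k, s k * R ω k) ∂μ := by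
  have h1 : (fun ω => (∑ k, v k * R ω k) ^ 2 * Real.exp (∑ k, s k * R ω k))
      = fun ω => ∑ i, ∑ j, (v i * v j) * (R ω i * R ω j * Real.exp (∑ k, s k * R ω k)) := by
    funext ω
    rw [sq, Finset.sum_mul_sum, Finset.sum_mul]
    refine Finset.sum_congr rfl fun i _ => ?_
    rw [Finset.sum_mul]
    exact Finset.sum_congr rfl fun j _ => by ring
  have hInt : ∀ i ∈ Finset.univ, Integrable
      (fun ω => ∑ j, (v i * v j) * (R ω i * R ω j * Real.exp (∑ k, s k * R ω k))) μ :=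
    fun i _ => integrable_finset_sum _ fun j _ => ((integrable_Rij hR hs i j).const_mul _)
  rw [h1, integral_finset_sum _ hInt]
  refine Finset.sum_congr rfl fun i _ => ?_
  rw [integral_finset_sum _ fun j _ => ((integrable_Rij hR hs i j).const_mul _)]
  exact Finset.sum_congr rfl fun j _ => integral_const_mul _ _

open scoped Matrix in
lemma quad_eq (v : Fin D → ℝ) :
    v ⬝ᵥ (Matrix.of fun i j => Hent μ R s i j) *ᵥ v = QV μ R s v / Zf μ R s := by
  have hZ : 0 < Zf μ R s := Zf_pos hR hs
  have hdot : v ⬝ᵥ (Matrix.of fun i j => Hent μ R s i j) *ᵥ v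
      = ∑ i, ∑ j, v i * (Hent μ R s i j * v j) := by
    simp [dotProduct, Matrix.mulVec, Finset.mul_sum]
  have hsplit : ∀ i j, v i * (Hent μ R s i j * v j)
      = (v i * v j * ∫ ω, R ω i * R ω j * Real.exp (∑ k, s k * R ω k) ∂μ) / Zf μ R s
        - ((v i * ∫ ω, R ω i * Real.exp (∑ k, s k * R ω k) ∂μ)
            * (v j * ∫ ω, R ω j * Real.exp (∑ k, s k * R ω k) ∂μ)) / (Zf μ R s * Zf μ R s) := by
    intro i j
    simp only [Hent]
    field_simp
  set SA := ∫ ω, (∑ k, v k * R ω k) ^ 2 * Real.exp (∑ k, s k * R ω k) ∂μ with hSA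
  set SM := ∫ ω, (∑ k, v k * R ω k) * Real.exp (∑ k, s k * R ω k) ∂μ with hSM
  have hL : v ⬝ᵥ (Matrix.of fun i j => Hent μ R s i j) *ᵥ v
      = SA / Zf μ R s - SM * SM / (Zf μ R s * Zf μ R s) := by
    rw [hdot]
    have h2 : ∑ i, ∑ j, v i * (Hent μ R s i j * v j)
        = (∑ i, ∑ j, v i * v j * ∫ ω, R ω i * R ω j * Real.exp (∑ k, s k * R ω k) ∂μ)
            / Zf μ R s
          - ((∑ i, v i * ∫ ω, R ω i * Real.exp (∑ k, s k * R ω k) ∂μ)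
            * (∑ j, v j * ∫ ω, R ω j * Real.exp (∑ k, s k * R ω k) ∂μ)) /
              (Zf μ R s * Zf μ R s) := by
      rw [Finset.sum_mul_sum, Finset.sum_div, Finset.sum_div]
      rw [← Finset.sum_sub_distrib]
      refine Finset.sum_congr rfl fun i _ => ?_
      rw [Finset.sum_div, Finset.sum_div, ← Finset.sum_sub_distrib]
      exact Finset.sum_congr rfl fun j _ => hsplit i j
    rw [h2, ← integral_g2e_eq hR hs v, ← integral_ge_eq hR hs v]
  have hm : mV μ R s v = SM / Zf μ R s := rfl
  have hQ : QV μ R s v = SA - 2 * mV μ R s v * SM + mV μ R s v ^ 2 * Zf μ R s := by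
    have hpt : (fun ω => ((∑ k, v k * R ω k) - mV μ R s v) ^ 2 * Real.exp (∑ k, s k * R ω k))
        = fun ω => ((∑ k, v k * R ω k) ^ 2 * Real.exp (∑ k, s k * R ω k)
            - 2 * mV μ R s v * ((∑ k, v k * R ω k) * Real.exp (∑ k, s k * R ω k)))
          + mV μ R s v ^ 2 * Real.exp (∑ k, s k * R ω k) := by
      funext ω; ring
    have hsS : s ∈ {s : Fin D → ℝ | Integrable (fun ω => Real.exp (∑ i, s i * R ω i)) μ} :=
      interior_subset hs
    have hie : Integrable (fun ω => Real.exp (∑ k, s k * R ω k)) μ := hsS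
    have hI3 : Integrable (fun ω =>
        2 * mV μ R s v * ((∑ k, v k * R ω k) * Real.exp (∑ k, s k * R ω k))) μ :=
      (integrable_ge hR hs v).const_mul _
    have hI1 : Integrable (fun ω =>
        (∑ k, v k * R ω k) ^ 2 * Real.exp (∑ k, s k * R ω k)
          - 2 * mV μ R s v * ((∑ k, v k * R ω k) * Real.exp (∑ k, s k * R ω k))) μ :=
      (integrable_g2e hR hs v).sub hI3
    have hI2 : Integrable (fun ω => mV μ R s v ^ 2 * Real.exp (∑ k, s k * R ω k)) μ :=
      hie.const_mul _
    rw [QV, hpt, integral_add hI1 hI2,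
      integral_sub (integrable_g2e hR hs v) hI3, integral_const_mul, integral_const_mul]
    rfl
  rw [hL, hQ, hm]
  field_simp
  ring

lemma QV_nonneg (v : Fin D → ℝ) : 0 ≤ QV μ R s v := by
  refine integral_nonneg fun ω => ?_
  positivity

lemma QV_eq_zero_iff (v : Fin D → ℝ) :
    QV μ R s v = 0 ↔ ∀ᵐ ω ∂μ, (∑ k, v k * R ω k) = mV μ R s v := by
  rw [QV, integral_eq_zero_iff_of_nonneg_ae (ae_of_all _ fun ω => by positivity)
    (integrable_gme2 hR hs v _)]
  constructor
  · intro h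
    refine h.mono fun ω hω => ?_
    have he : Real.exp (∑ k, s k * R ω k) ≠ 0 := (Real.exp_pos _).ne'
    have h2 : ((∑ k, v k * R ω k) - mV μ R s v) ^ 2 = 0 := by
      rcases mul_eq_zero.1 hω with h' | h'
      · exact h'
      · exact absurd h' he
    have := pow_eq_zero_iff (n := 2) (by norm_num) |>.1 h2
    linarith [sub_eq_zero.1 this]
  · intro h
    refine h.mono fun ω hω => ?_
    simp only [hω]
    simp

lemma mV_of_ae_const (v : Fin D → ℝ) {c : ℝ} (h : ∀ᵐ ω ∂μ, (∑ k, v k * R ω k) = c) :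
    mV μ R s v = c := by
  have hZ : 0 < Zf μ R s := Zf_pos hR hs
  have h1 : ∫ ω, (∑ k, v k * R ω k) * Real.exp (∑ k, s k * R ω k) ∂μ
      = ∫ ω, c * Real.exp (∑ k, s k * R ω k) ∂μ :=
    integral_congr_ae (h.mono fun ω hω => by simp only [hω])
  rw [mV, h1, integral_const_mul]
  exact mul_div_cancel_right₀ c hZ.ne'

end Quad2

end CGFaux2


/-- Let `R` be an `ℝ^D`-valued random variable whose CGF
`K_R(s) = log E[e^{s·R}]` is finite on a nonempty open set. Then either the Hessian `K_R''(s)`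
is singular for every `s` in the interior of the domain — which happens exactly when `R` is
supported on an affine hyperplane — or `K_R''(s)` is positive definite for every such `s`. -/
theorem cgf_hessian_dichotomy
    {Ω : Type*} [MeasurableSpace Ω] (μ : Measure Ω) [IsProbabilityMeasure μ]
    {D : ℕ} (R : Ω → Fin D → ℝ) (hR : Measurable R)
    (hopen : (interior {s : Fin D → ℝ |
        Integrable (fun ω => Real.exp (∑ i, s i * R ω i)) μ}).Nonempty) :
    ((∀ s ∈ interior {s : Fin D → ℝ |
          Integrable (fun ω => Real.exp (∑ i, s i * R ω i)) μ},
        (Matrix.of fun i j =>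
          fderiv ℝ (fun x =>
            fderiv ℝ (fun y => Real.log (∫ ω, Real.exp (∑ i, y i * R ω i) ∂μ)) x
              (Pi.single j 1)) s (Pi.single i 1)).det = 0)
      ∨ (∀ s ∈ interior {s : Fin D → ℝ |
            Integrable (fun ω => Real.exp (∑ i, s i * R ω i)) μ},
          (Matrix.of fun i j =>
            fderiv ℝ (fun x =>
              fderiv ℝ (fun y => Real.log (∫ ω, Real.exp (∑ i, y i * R ω i) ∂μ)) x
                (Pi.single j 1)) s (Pi.single i 1)).PosDef))
    ∧ ((∀ s ∈ interior {s : Fin D → ℝ |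
          Integrable (fun ω => Real.exp (∑ i, s i * R ω i)) μ},
        (Matrix.of fun i j =>
          fderiv ℝ (fun x =>
            fderiv ℝ (fun y => Real.log (∫ ω, Real.exp (∑ i, y i * R ω i) ∂μ)) x
              (Pi.single j 1)) s (Pi.single i 1)).det = 0)
      ↔ ∃ (v : Fin D → ℝ) (c : ℝ), v ≠ 0 ∧ ∀ᵐ ω ∂μ, ∑ i, v i * R ω i = c) := by
  classical
  set M : (Fin D → ℝ) → Matrix (Fin D) (Fin D) ℝ := fun s =>
    Matrix.of fun i j =>
      fderiv ℝ (fun x =>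
        fderiv ℝ (fun y => Real.log (∫ ω, Real.exp (∑ i, y i * R ω i) ∂μ)) x
          (Pi.single j 1)) s (Pi.single i 1) with hMdef
  have hstar : ∀ x : Fin D → ℝ, star x = x := fun x => funext fun i => rfl
  have hM : ∀ s ∈ interior {s : Fin D → ℝ |
      Integrable (fun ω => Real.exp (∑ i, s i * R ω i)) μ},
      M s = Matrix.of fun i j => CGFaux2.Hent μ R s i j := by
    intro s hs
    ext i j
    exact CGFaux2.hessian_entry' hR hs i j
  have hherm : ∀ s ∈ interior {s : Fin D → ℝ |
      Integrable (fun ω => Real.exp (∑ i, s i * R ω i)) μ}, (M s).IsHermitian := by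
    intro s hs
    rw [hM s hs]
    ext i j
    simp only [Matrix.conjTranspose_apply, Matrix.of_apply, star_trivial]
    exact CGFaux2.Hent_symm s j i
  have hquad : ∀ s ∈ interior {s : Fin D → ℝ |
      Integrable (fun ω => Real.exp (∑ i, s i * R ω i)) μ}, ∀ v : Fin D → ℝ,
      v ⬝ᵥ (M s) *ᵥ v = CGFaux2.QV μ R s v / CGFaux2.Zf μ R s := by
    intro s hs v
    rw [hM s hs]
    exact CGFaux2.quad_eq hR hs v
  have hnonneg : ∀ s ∈ interior {s : Fin D → ℝ |
      Integrable (fun ω => Real.exp (∑ i, s i * R ω i)) μ}, ∀ v : Fin D → ℝ,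
      0 ≤ v ⬝ᵥ (M s) *ᵥ v := by
    intro s hs v
    rw [hquad s hs v]
    exact div_nonneg (CGFaux2.QV_nonneg hR hs v) (CGFaux2.Zf_pos hR hs).le
  have hzero_iff : ∀ s ∈ interior {s : Fin D → ℝ |
      Integrable (fun ω => Real.exp (∑ i, s i * R ω i)) μ}, ∀ v : Fin D → ℝ,
      (v ⬝ᵥ (M s) *ᵥ v = 0 ↔ ∃ c : ℝ, ∀ᵐ ω ∂μ, ∑ i, v i * R ω i = c) := by
    intro s hs v
    rw [hquad s hs v]
    have hZ : 0 < CGFaux2.Zf μ R s := CGFaux2.Zf_pos hR hs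
    rw [div_eq_zero_iff]
    constructor
    · rintro (h | h)
      · exact ⟨CGFaux2.mV μ R s v, (CGFaux2.QV_eq_zero_iff hR hs v).1 h⟩
      · exact absurd h hZ.ne'
    · rintro ⟨c, hc⟩
      left
      refine (CGFaux2.QV_eq_zero_iff hR hs v).2 ?_
      rwa [CGFaux2.mV_of_ae_const hR hs v hc]
  have hPSD : ∀ s ∈ interior {s : Fin D → ℝ |
      Integrable (fun ω => Real.exp (∑ i, s i * R ω i)) μ}, (M s).PosSemidef := by
    intro s hs
    refine Matrix.posSemidef_iff_dotProduct_mulVec.2 ⟨hherm s hs, fun v => ?_⟩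
    rw [hstar v]
    exact hnonneg s hs v
  by_cases hP : ∃ (v : Fin D → ℝ) (c : ℝ), v ≠ 0 ∧ ∀ᵐ ω ∂μ, ∑ i, v i * R ω i = c
  · -- degenerate case : singular everywhere
    have hdet : ∀ s ∈ interior {s : Fin D → ℝ |
        Integrable (fun ω => Real.exp (∑ i, s i * R ω i)) μ}, (M s).det = 0 := by
      intro s hs
      obtain ⟨v, c, hv0, hc⟩ := hP
      have hq0 : v ⬝ᵥ (M s) *ᵥ v = 0 := (hzero_iff s hs v).2 ⟨c, hc⟩
      have hmv : (M s) *ᵥ v = 0 := by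
        refine ((hPSD s hs).dotProduct_mulVec_zero_iff v).1 ?_
        rwa [hstar v]
      exact Matrix.exists_mulVec_eq_zero_iff.1 ⟨v, hv0, hmv⟩
    exact ⟨Or.inl hdet, iff_of_true hdet hP⟩
  · -- nondegenerate case : positive definite everywhere
    have hpd : ∀ s ∈ interior {s : Fin D → ℝ |
        Integrable (fun ω => Real.exp (∑ i, s i * R ω i)) μ}, (M s).PosDef := by
      intro s hs
      refine Matrix.posDef_iff_dotProduct_mulVec.2 ⟨hherm s hs, fun v hv0 => ?_⟩
      rw [hstar v]
      refine lt_of_le_of_ne (hnonneg s hs v) fun h => ?_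
      obtain ⟨c, hc⟩ := (hzero_iff s hs v).1 h.symm
      exact hP ⟨v, c, hv0, hc⟩
    refine ⟨Or.inr hpd, ?_⟩
    constructor
    · intro hall
      obtain ⟨s₀, hs₀⟩ := hopen
      obtain ⟨v, hv0, hmv⟩ := Matrix.exists_mulVec_eq_zero_iff.2 (hall s₀ hs₀)
      have hq0 : v ⬝ᵥ (M s₀) *ᵥ v = 0 := by rw [hmv, dotProduct_zero]
      obtain ⟨c, hc⟩ := (hzero_iff s₀ hs₀ v).1 hq0
      exact ⟨v, c, hv0, hc⟩
    · intro h
      exact absurd h hP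
end
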